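/- arXiv:2205.12930 — 3 statements merged into one kernel-verified Lean document; each statement's English description precedes it below -/
import Mathlib

section
/- Let d ≥ 1, Λ ≥ 1, and let a : ℝ → (real symmetric d×d matrices) be measurable with Λ⁻¹|e|² ≤ e·a(t)e ≤ Λ|e|² for all t and e. Then for every t > 0 the matrix P(t) is invertible, and there are constants c, C > 0 depending only on d and Λ such that for all t > 0 and all w ∈ ℝ^d: (i) c·t³|w|² ≤ w·P(t)w ≤ C·t³|w|²; (ii) c·t^{i+1}|w| ≤ |A_i(t)w| ≤ C·t^{i+1}|w| for i = 0, 1, 2; (iii) |M(t)w| ≤ C·t|w|. -/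
noncomputable section

open Real MeasureTheory Matrix Set
open scoped ENNReal

/-- Euclidean norm on `Fin d → ℝ`. -/
def eunorm {d : ℕ} (x : Fin d → ℝ) : ℝ := Real.sqrt (∑ i, (x i) ^ 2)

/-- The moment matrices `A_i(t) = ∫₀ᵗ sⁱ a(s) ds`. -/
def Amat {d : ℕ} (a : ℝ → Matrix (Fin d) (Fin d) ℝ) (i : ℕ) (t : ℝ) :
    Matrix (Fin d) (Fin d) ℝ :=
  Matrix.of fun j k => ∫ s in Set.Ioc (0:ℝ) t, s ^ i * a s j k

/-- `P(t) = A₂(t) − A₁(t)A₀(t)⁻¹A₁(t)`. -/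
def Pmat {d : ℕ} (a : ℝ → Matrix (Fin d) (Fin d) ℝ) (t : ℝ) : Matrix (Fin d) (Fin d) ℝ :=
  Amat a 2 t - Amat a 1 t * (Amat a 0 t)⁻¹ * Amat a 1 t

/-- `M(t) = t·Id − A₀(t)⁻¹A₁(t)`. -/
def Mmat {d : ℕ} (a : ℝ → Matrix (Fin d) (Fin d) ℝ) (t : ℝ) : Matrix (Fin d) (Fin d) ℝ :=
  t • (1 : Matrix (Fin d) (Fin d) ℝ) - (Amat a 0 t)⁻¹ * Amat a 1 t

/-- The fundamental solution `Γ_a` of the `(x,v)`-homogeneous kinetic Fokker-Planck equation. -/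
def Gam {d : ℕ} (a : ℝ → Matrix (Fin d) (Fin d) ℝ)
    (z : ℝ × (Fin d → ℝ) × (Fin d → ℝ)) : ℝ :=
  if 0 < z.1 then
    (4 * π) ^ (-(d:ℝ)) * (Real.sqrt ((Amat a 0 z.1 * Pmat a z.1).det))⁻¹ *
      Real.exp (-(z.2.2 ⬝ᵥ ((Amat a 0 z.1)⁻¹).mulVec z.2.2) / 4 -
        ((z.2.1 - (Mmat a z.1).mulVec z.2.2) ⬝ᵥ
          ((Pmat a z.1)⁻¹).mulVec (z.2.1 - (Mmat a z.1).mulVec z.2.2)) / 4)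
  else 0

/-- `a` is measurable (entrywise). -/
def MeasCoeff {d : ℕ} (a : ℝ → Matrix (Fin d) (Fin d) ℝ) : Prop :=
  ∀ j k, Measurable fun t => a t j k

/-- `a(t)` is symmetric and uniformly elliptic: `Λ⁻¹|e|² ≤ e·a(t)e ≤ Λ|e|²`. -/
def Elliptic {d : ℕ} (Λ : ℝ) (a : ℝ → Matrix (Fin d) (Fin d) ℝ) : Prop :=
  ∀ t : ℝ, (a t).IsSymm ∧ ∀ e : Fin d → ℝ,
    Λ⁻¹ * (e ⬝ᵥ e) ≤ e ⬝ᵥ (a t).mulVec e ∧ e ⬝ᵥ (a t).mulVec e ≤ Λ * (e ⬝ᵥ e)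

namespace MSBaux

variable {d : ℕ}

lemma dot_self_nonneg (x : Fin d → ℝ) : 0 ≤ x ⬝ᵥ x :=
  Finset.sum_nonneg fun i _ => mul_self_nonneg _

lemma eunorm_nonneg (x : Fin d → ℝ) : 0 ≤ eunorm x := Real.sqrt_nonneg _

lemma eunorm_eq (x : Fin d → ℝ) : eunorm x = Real.sqrt (x ⬝ᵥ x) := by
  simp [eunorm, dotProduct, pow_two]

lemma eunorm_sq (x : Fin d → ℝ) : eunorm x ^ 2 = x ⬝ᵥ x := by
  rw [eunorm_eq, Real.sq_sqrt (dot_self_nonneg x)]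

lemma dot_cs (x y : Fin d → ℝ) : (x ⬝ᵥ y) ^ 2 ≤ (x ⬝ᵥ x) * (y ⬝ᵥ y) := by
  have h := Finset.sum_mul_sq_le_sq_mul_sq Finset.univ x y
  simpa [dotProduct, pow_two] using h

lemma dot_le (x y : Fin d → ℝ) : x ⬝ᵥ y ≤ eunorm x * eunorm y := by
  calc x ⬝ᵥ y ≤ |x ⬝ᵥ y| := le_abs_self _
    _ = Real.sqrt ((x ⬝ᵥ y) ^ 2) := (Real.sqrt_sq_eq_abs _).symm
    _ ≤ Real.sqrt ((x ⬝ᵥ x) * (y ⬝ᵥ y)) := Real.sqrt_le_sqrt (dot_cs x y)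
    _ = eunorm x * eunorm y := by
        rw [Real.sqrt_mul (dot_self_nonneg x), eunorm_eq, eunorm_eq]

lemma eunorm_le_of_sq {x : Fin d → ℝ} {r : ℝ} (hr : 0 ≤ r) (h : x ⬝ᵥ x ≤ r ^ 2) :
    eunorm x ≤ r := by
  rw [eunorm_eq]
  calc Real.sqrt (x ⬝ᵥ x) ≤ Real.sqrt (r ^ 2) := Real.sqrt_le_sqrt h
    _ = r := Real.sqrt_sq hr

lemma dot_expand (x y : Fin d → ℝ) :
    (x + y) ⬝ᵥ (x + y) = x ⬝ᵥ x + 2 * (x ⬝ᵥ y) + y ⬝ᵥ y := by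
  rw [add_dotProduct, dotProduct_add, dotProduct_add,
    dotProduct_comm y x]
  ring

lemma eunorm_add_le (x y : Fin d → ℝ) : eunorm (x + y) ≤ eunorm x + eunorm y := by
  apply eunorm_le_of_sq (add_nonneg (eunorm_nonneg x) (eunorm_nonneg y))
  rw [dot_expand]
  nlinarith [dot_le x y, eunorm_sq x, eunorm_sq y, eunorm_nonneg x, eunorm_nonneg y]

lemma eunorm_neg (x : Fin d → ℝ) : eunorm (-x) = eunorm x := by
  simp [eunorm]

lemma eunorm_sub_le (x y : Fin d → ℝ) : eunorm (x - y) ≤ eunorm x + eunorm y := by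
  rw [sub_eq_add_neg]
  calc eunorm (x + -y) ≤ eunorm x + eunorm (-y) := eunorm_add_le x (-y)
    _ = eunorm x + eunorm y := by rw [eunorm_neg]

lemma eunorm_smul (c : ℝ) (x : Fin d → ℝ) : eunorm (c • x) = |c| * eunorm x := by
  rw [eunorm_eq, eunorm_eq, smul_dotProduct, dotProduct_smul,
    smul_eq_mul, smul_eq_mul, show c * (c * (x ⬝ᵥ x)) = c ^ 2 * (x ⬝ᵥ x) by ring,
    Real.sqrt_mul (sq_nonneg c), Real.sqrt_sq_eq_abs]

lemma dot_mulVec_symm {A : Matrix (Fin d) (Fin d) ℝ} (hA : A.IsSymm) (u v : Fin d → ℝ) :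
    u ⬝ᵥ A.mulVec v = v ⬝ᵥ A.mulVec u := by
  rw [Matrix.dotProduct_mulVec, ← Matrix.mulVec_transpose, hA.eq, dotProduct_comm]

lemma quad_cs {A : Matrix (Fin d) (Fin d) ℝ} (hA : A.IsSymm)
    (h0 : ∀ z : Fin d → ℝ, 0 ≤ z ⬝ᵥ A.mulVec z) (x y : Fin d → ℝ) :
    (x ⬝ᵥ A.mulVec y) ^ 2 ≤ (x ⬝ᵥ A.mulVec x) * (y ⬝ᵥ A.mulVec y) := by
  have key : ∀ lam : ℝ, 0 ≤ (y ⬝ᵥ A.mulVec y) * (lam * lam)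
      + (2 * (x ⬝ᵥ A.mulVec y)) * lam + (x ⬝ᵥ A.mulVec x) := by
    intro lam
    have h := h0 (x + lam • y)
    have e : (x + lam • y) ⬝ᵥ A.mulVec (x + lam • y)
        = (y ⬝ᵥ A.mulVec y) * (lam * lam) + (2 * (x ⬝ᵥ A.mulVec y)) * lam
          + (x ⬝ᵥ A.mulVec x) := by
      simp only [Matrix.mulVec_add, Matrix.mulVec_smul, dotProduct_add,
        add_dotProduct, smul_dotProduct, dotProduct_smul, smul_eq_mul,
        dot_mulVec_symm hA y x]
      ring
    rw [e] at h
    exact h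
  have hd := discrim_le_zero key
  rw [discrim] at hd
  nlinarith [hd]

lemma le_mulVec {A : Matrix (Fin d) (Fin d) ℝ} {α : ℝ} (hα : 0 ≤ α)
    (hlb : ∀ z : Fin d → ℝ, α * (z ⬝ᵥ z) ≤ z ⬝ᵥ A.mulVec z) (w : Fin d → ℝ) :
    α * eunorm w ≤ eunorm (A.mulVec w) := by
  rcases eq_or_ne (eunorm w) 0 with h | h
  · rw [h, mul_zero]; exact eunorm_nonneg _
  have hw : 0 < eunorm w := lt_of_le_of_ne (eunorm_nonneg w) (Ne.symm h)
  have h1 : α * (w ⬝ᵥ w) ≤ w ⬝ᵥ A.mulVec w := hlb w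
  have h2 : w ⬝ᵥ A.mulVec w ≤ eunorm w * eunorm (A.mulVec w) := dot_le w (A.mulVec w)
  have h3 := eunorm_sq w
  nlinarith [eunorm_nonneg (A.mulVec w)]

lemma mulVec_le {A : Matrix (Fin d) (Fin d) ℝ} (hA : A.IsSymm) {β : ℝ} (hβ : 0 ≤ β)
    (h0 : ∀ z : Fin d → ℝ, 0 ≤ z ⬝ᵥ A.mulVec z)
    (hub : ∀ z : Fin d → ℝ, z ⬝ᵥ A.mulVec z ≤ β * (z ⬝ᵥ z)) (w : Fin d → ℝ) :
    eunorm (A.mulVec w) ≤ β * eunorm w := by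
  set u := A.mulVec w with hu
  apply eunorm_le_of_sq (mul_nonneg hβ (eunorm_nonneg w))
  have h1 : (u ⬝ᵥ A.mulVec w) ^ 2 ≤ (u ⬝ᵥ A.mulVec u) * (w ⬝ᵥ A.mulVec w) := quad_cs hA h0 u w
  have h4 : u ⬝ᵥ u = u ⬝ᵥ A.mulVec w := rfl
  have h5 : (u ⬝ᵥ u) ^ 2 ≤ β ^ 2 * ((u ⬝ᵥ u) * (w ⬝ᵥ w)) := by
    nlinarith [hub u, hub w, h0 u, h0 w, dot_self_nonneg u, dot_self_nonneg w, h1, h4]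
  have h6 : u ⬝ᵥ u ≤ β ^ 2 * (w ⬝ᵥ w) := by
    rcases eq_or_lt_of_le (dot_self_nonneg u) with h | h
    · rw [← h]; exact mul_nonneg (sq_nonneg β) (dot_self_nonneg w)
    · nlinarith [h5]
  calc u ⬝ᵥ u ≤ β ^ 2 * (w ⬝ᵥ w) := h6
    _ = (β * eunorm w) ^ 2 := by rw [mul_pow, eunorm_sq]

lemma det_isUnit_of_pd {A : Matrix (Fin d) (Fin d) ℝ} {α : ℝ} (hα : 0 < α)
    (hlb : ∀ z : Fin d → ℝ, α * (z ⬝ᵥ z) ≤ z ⬝ᵥ A.mulVec z) : IsUnit A.det := by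
  rw [isUnit_iff_ne_zero]
  intro hdet
  obtain ⟨v, hv, hAv⟩ := (Matrix.exists_mulVec_eq_zero_iff).2 hdet
  have h1 := hlb v
  rw [hAv, dotProduct_zero] at h1
  have hvv : v ⬝ᵥ v = 0 := le_antisymm (by nlinarith [dot_self_nonneg v]) (dot_self_nonneg v)
  exact hv (dotProduct_self_eq_zero.mp hvv)

section ell

variable {Λ : ℝ} {a : ℝ → Matrix (Fin d) (Fin d) ℝ} {t : ℝ}

lemma quad_nonneg (hΛ : 1 ≤ Λ) (hell : Elliptic Λ a) (s : ℝ) (z : Fin d → ℝ) :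
    0 ≤ z ⬝ᵥ (a s).mulVec z :=
  le_trans (mul_nonneg (inv_nonneg.mpr (by linarith)) (dot_self_nonneg z)) ((hell s).2 z).1

lemma entry_bound (hΛ : 1 ≤ Λ) (hell : Elliptic Λ a) (s : ℝ) (j k : Fin d) :
    |a s j k| ≤ Λ := by
  obtain ⟨hsym, hq⟩ := hell s
  have hcs := quad_cs hsym (quad_nonneg hΛ hell s) (Pi.single j 1) (Pi.single k 1)
  have hjk : Pi.single j (1:ℝ) ⬝ᵥ (a s).mulVec (Pi.single k 1) = a s j k := by
    simp [Matrix.mulVec_single, single_dotProduct]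
  have hone : ∀ l : Fin d, Pi.single l (1:ℝ) ⬝ᵥ Pi.single l (1:ℝ) = 1 := by
    intro l; simp [single_dotProduct]
  have hj : Pi.single j (1:ℝ) ⬝ᵥ (a s).mulVec (Pi.single j 1) ≤ Λ := by
    have h := (hq (Pi.single j 1)).2
    rw [hone j, mul_one] at h; exact h
  have hk : Pi.single k (1:ℝ) ⬝ᵥ (a s).mulVec (Pi.single k 1) ≤ Λ := by
    have h := (hq (Pi.single k 1)).2
    rw [hone k, mul_one] at h; exact h
  rw [hjk] at hcs
  have h0j := quad_nonneg hΛ hell s (Pi.single j (1:ℝ))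
  have h0k := quad_nonneg hΛ hell s (Pi.single k (1:ℝ))
  rw [abs_le]
  constructor <;> nlinarith [hcs, hj, hk, h0j, h0k, sq_nonneg (a s j k + Λ),
    sq_nonneg (a s j k - Λ)]

lemma entry_intble (hΛ : 1 ≤ Λ) (ha : MeasCoeff a) (hell : Elliptic Λ a) (ht : 0 < t)
    (i : ℕ) (j k : Fin d) :
    IntegrableOn (fun s => s ^ i * a s j k) (Ioc (0:ℝ) t) := by
  haveI : IsFiniteMeasure (volume.restrict (Ioc (0:ℝ) t)) :=
    ⟨by rw [Measure.restrict_apply_univ]; exact measure_Ioc_lt_top⟩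
  have hm : Measurable fun s : ℝ => s ^ i * a s j k :=
    (measurable_id.pow_const i).mul (ha j k)
  refine Integrable.mono' (integrable_const (t ^ i * Λ)) hm.aestronglyMeasurable ?_
  filter_upwards [ae_restrict_mem measurableSet_Ioc] with s hs
  rw [Real.norm_eq_abs, abs_mul]
  have h1 : |s ^ i| ≤ t ^ i := by
    rw [abs_pow, abs_of_pos hs.1]
    exact pow_le_pow_left₀ hs.1.le hs.2 i
  exact mul_le_mul h1 (entry_bound hΛ hell s j k) (abs_nonneg _) (pow_nonneg ht.le i)

lemma bform_eq (i : ℕ) (x y : Fin d → ℝ) (s : ℝ) :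
    s ^ i * (x ⬝ᵥ (a s).mulVec y) = ∑ j, ∑ k, x j * ((s ^ i * a s j k) * y k) := by
  have h1 : x ⬝ᵥ (a s).mulVec y = ∑ j, ∑ k, x j * (a s j k * y k) := by
    simp only [dotProduct, Matrix.mulVec, Finset.mul_sum]
  rw [h1, Finset.mul_sum]
  refine Finset.sum_congr rfl fun j _ => ?_
  rw [Finset.mul_sum]
  exact Finset.sum_congr rfl fun k _ => by ring

lemma bform_intble (hΛ : 1 ≤ Λ) (ha : MeasCoeff a) (hell : Elliptic Λ a) (ht : 0 < t)
    (i : ℕ) (x y : Fin d → ℝ) :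
    IntegrableOn (fun s => s ^ i * (x ⬝ᵥ (a s).mulVec y)) (Ioc (0:ℝ) t) := by
  have h : (fun s : ℝ => s ^ i * (x ⬝ᵥ (a s).mulVec y))
      = fun s => ∑ j, ∑ k, x j * ((s ^ i * a s j k) * y k) := funext fun s => bform_eq i x y s
  rw [h]
  exact integrable_finset_sum _ fun j _ => integrable_finset_sum _ fun k _ =>
    ((entry_intble hΛ ha hell ht i j k).mul_const (y k)).const_mul (x j)

lemma bform_integral (hΛ : 1 ≤ Λ) (ha : MeasCoeff a) (hell : Elliptic Λ a) (ht : 0 < t)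
    (i : ℕ) (x y : Fin d → ℝ) :
    x ⬝ᵥ (Amat a i t).mulVec y = ∫ s in Ioc (0:ℝ) t, s ^ i * (x ⬝ᵥ (a s).mulVec y) := by
  have hL : x ⬝ᵥ (Amat a i t).mulVec y
      = ∑ j, ∑ k, x j * ((∫ s in Ioc (0:ℝ) t, s ^ i * a s j k) * y k) := by
    simp only [Amat, dotProduct, Matrix.mulVec, Matrix.of_apply, Finset.mul_sum]
  rw [hL]
  simp only [bform_eq]
  rw [integral_finset_sum _ (fun j _ => integrable_finset_sum _ fun k _ =>
    ((entry_intble hΛ ha hell ht i j k).mul_const (y k)).const_mul (x j))]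
  refine Finset.sum_congr rfl fun j _ => ?_
  rw [integral_finset_sum _ (fun k _ =>
    ((entry_intble hΛ ha hell ht i j k).mul_const (y k)).const_mul (x j))]
  refine Finset.sum_congr rfl fun k _ => ?_
  rw [integral_const_mul, integral_mul_const]

lemma ipow (ht : 0 < t) (i : ℕ) :
    (∫ s in Ioc (0:ℝ) t, s ^ i) = t ^ (i + 1) / ((i : ℝ) + 1) := by
  rw [← intervalIntegral.integral_of_le ht.le, integral_pow]
  push_cast
  ring

lemma ipow_mul (ht : 0 < t) (i : ℕ) (K : ℝ) :
    (∫ s in Ioc (0:ℝ) t, s ^ i * K) = t ^ (i + 1) / ((i : ℝ) + 1) * K := by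
  rw [integral_mul_const, ipow ht]

lemma quad_lb (hΛ : 1 ≤ Λ) (ha : MeasCoeff a) (hell : Elliptic Λ a) (ht : 0 < t)
    (i : ℕ) (x : Fin d → ℝ) :
    Λ⁻¹ * (t ^ (i + 1) / ((i : ℝ) + 1)) * (x ⬝ᵥ x) ≤ x ⬝ᵥ (Amat a i t).mulVec x := by
  rw [bform_integral hΛ ha hell ht i x x]
  have h : Λ⁻¹ * (t ^ (i + 1) / ((i : ℝ) + 1)) * (x ⬝ᵥ x)
      = ∫ s in Ioc (0:ℝ) t, s ^ i * (Λ⁻¹ * (x ⬝ᵥ x)) := by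
    rw [ipow_mul ht]; ring
  rw [h]
  refine setIntegral_mono_on ?_ (bform_intble hΛ ha hell ht i x x) measurableSet_Ioc ?_
  · exact ((continuous_pow i).mul continuous_const).integrableOn_Ioc
  · intro s hs
    exact mul_le_mul_of_nonneg_left ((hell s).2 x).1 (pow_nonneg hs.1.le i)

lemma quad_ub (hΛ : 1 ≤ Λ) (ha : MeasCoeff a) (hell : Elliptic Λ a) (ht : 0 < t)
    (i : ℕ) (x : Fin d → ℝ) :
    x ⬝ᵥ (Amat a i t).mulVec x ≤ Λ * (t ^ (i + 1) / ((i : ℝ) + 1)) * (x ⬝ᵥ x) := by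
  rw [bform_integral hΛ ha hell ht i x x]
  have h : Λ * (t ^ (i + 1) / ((i : ℝ) + 1)) * (x ⬝ᵥ x)
      = ∫ s in Ioc (0:ℝ) t, s ^ i * (Λ * (x ⬝ᵥ x)) := by
    rw [ipow_mul ht]; ring
  rw [h]
  refine setIntegral_mono_on (bform_intble hΛ ha hell ht i x x) ?_ measurableSet_Ioc ?_
  · exact ((continuous_pow i).mul continuous_const).integrableOn_Ioc
  · intro s hs
    exact mul_le_mul_of_nonneg_left ((hell s).2 x).2 (pow_nonneg hs.1.le i)

lemma Amat_symm (hell : Elliptic Λ a) (i : ℕ) : (Amat a i t).IsSymm := by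
  refine Matrix.IsSymm.ext fun j k => ?_
  simp only [Amat, Matrix.of_apply]
  have h : ∀ s : ℝ, s ^ i * a s k j = s ^ i * a s j k := fun s => by
    rw [(hell s).1.apply j k]
  simp only [h]

end ell

end MSBaux


/-- **Quantitative bounds on the matrices `P(t)`, `A_i(t)`, `M(t)`** (Lemma 2.4).
The constants `c`, `C` depend only on `d` and `Λ`. -/
theorem matrix_scaling_bounds (d : ℕ) (hd : 1 ≤ d) (Λ : ℝ) (hΛ : 1 ≤ Λ) :
    ∃ c C : ℝ, 0 < c ∧ 0 < C ∧
      ∀ (a : ℝ → Matrix (Fin d) (Fin d) ℝ), MeasCoeff a → Elliptic Λ a →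
      ∀ t : ℝ, 0 < t →
        -- `P(t)` is invertible
        IsUnit (Pmat a t).det ∧
        ∀ w : Fin d → ℝ,
          -- (i)  `c t³|w|² ≤ w·P(t)w ≤ C t³|w|²`
          (c * t ^ 3 * (eunorm w) ^ 2 ≤ w ⬝ᵥ (Pmat a t).mulVec w ∧
            w ⬝ᵥ (Pmat a t).mulVec w ≤ C * t ^ 3 * (eunorm w) ^ 2) ∧
          -- (ii) `c t^{i+1}|w| ≤ |A_i(t)w| ≤ C t^{i+1}|w|` for `i = 0,1,2`
          (∀ i : ℕ, i ≤ 2 →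
            c * t ^ (i + 1) * eunorm w ≤ eunorm ((Amat a i t).mulVec w) ∧
            eunorm ((Amat a i t).mulVec w) ≤ C * t ^ (i + 1) * eunorm w) ∧
          -- (iii) `|M(t)w| ≤ C t |w|`
          eunorm ((Mmat a t).mulVec w) ≤ C * t * eunorm w := by
  have hΛ0 : (0:ℝ) < Λ := by linarith
  refine ⟨(12 * Λ)⁻¹, Λ ^ 2 + 1, by positivity, by positivity, ?_⟩
  intro a ha hell t ht
  have hlbA : ∀ (i : ℕ) (x : Fin d → ℝ),
      Λ⁻¹ * (t ^ (i + 1) / ((i : ℝ) + 1)) * (x ⬝ᵥ x) ≤ x ⬝ᵥ (Amat a i t).mulVec x :=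
    fun i x => MSBaux.quad_lb hΛ ha hell ht i x
  have hubA : ∀ (i : ℕ) (x : Fin d → ℝ),
      x ⬝ᵥ (Amat a i t).mulVec x ≤ Λ * (t ^ (i + 1) / ((i : ℝ) + 1)) * (x ⬝ᵥ x) :=
    fun i x => MSBaux.quad_ub hΛ ha hell ht i x
  have hsymA : ∀ i : ℕ, (Amat a i t).IsSymm := fun i => MSBaux.Amat_symm hell i
  have hposA : ∀ (i : ℕ) (z : Fin d → ℝ), 0 ≤ z ⬝ᵥ (Amat a i t).mulVec z := fun i z =>
    le_trans (mul_nonneg (by positivity) (MSBaux.dot_self_nonneg z)) (hlbA i z)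
  have hnl : ∀ (i : ℕ) (w : Fin d → ℝ),
      Λ⁻¹ * (t ^ (i + 1) / ((i : ℝ) + 1)) * eunorm w ≤ eunorm ((Amat a i t).mulVec w) :=
    fun i w => MSBaux.le_mulVec (by positivity) (hlbA i) w
  have hnu : ∀ (i : ℕ) (w : Fin d → ℝ),
      eunorm ((Amat a i t).mulVec w) ≤ Λ * (t ^ (i + 1) / ((i : ℝ) + 1)) * eunorm w :=
    fun i w => MSBaux.mulVec_le (hsymA i) (by positivity) (hposA i) (hubA i) w
  have hA0det : IsUnit (Amat a 0 t).det :=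
    MSBaux.det_isUnit_of_pd (by positivity) (hlbA 0)
  have hinv : Amat a 0 t * (Amat a 0 t)⁻¹ = 1 := Matrix.mul_nonsing_inv _ hA0det
  have bf : ∀ (i : ℕ) (x y : Fin d → ℝ),
      IntegrableOn (fun s => s ^ i * (x ⬝ᵥ (a s).mulVec y)) (Ioc (0:ℝ) t) :=
    fun i x y => MSBaux.bform_intble hΛ ha hell ht i x y
  have bi : ∀ (i : ℕ) (x y : Fin d → ℝ),
      x ⬝ᵥ (Amat a i t).mulVec y = ∫ s in Ioc (0:ℝ) t, s ^ i * (x ⬝ᵥ (a s).mulVec y) :=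
    fun i x y => MSBaux.bform_integral hΛ ha hell ht i x y
  have ic : ∀ (i : ℕ) (K : ℝ), IntegrableOn (fun s => s ^ i * K) (Ioc (0:ℝ) t) :=
    fun i K => ((continuous_pow i).mul continuous_const).integrableOn_Ioc
  -- Schur decomposition of the quadratic form of `P`
  have hPdec : ∀ w : Fin d → ℝ, w ⬝ᵥ (Pmat a t).mulVec w
      = w ⬝ᵥ (Amat a 2 t).mulVec w
        - ((Amat a 0 t)⁻¹.mulVec ((Amat a 1 t).mulVec w)) ⬝ᵥ ((Amat a 1 t).mulVec w) := by
    intro w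
    rw [Pmat, Matrix.sub_mulVec, dotProduct_sub]
    congr 1
    rw [Matrix.mul_assoc, ← Matrix.mulVec_mulVec, ← Matrix.mulVec_mulVec,
      MSBaux.dot_mulVec_symm (hsymA 1) w ((Amat a 0 t)⁻¹.mulVec ((Amat a 1 t).mulVec w))]
  have hA0u : ∀ w : Fin d → ℝ,
      (Amat a 0 t).mulVec ((Amat a 0 t)⁻¹.mulVec w) = w := by
    intro w
    rw [Matrix.mulVec_mulVec, hinv, Matrix.one_mulVec]
  have hPlow : ∀ w : Fin d → ℝ,
      (12 * Λ)⁻¹ * t ^ 3 * (w ⬝ᵥ w) ≤ w ⬝ᵥ (Pmat a t).mulVec w := by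
    intro w
    have hd' := hPdec w
    set u := (Amat a 0 t)⁻¹.mulVec ((Amat a 1 t).mulVec w) with hu
    set x₀ := -u with hx₀
    have hA0u' : (Amat a 0 t).mulVec u = (Amat a 1 t).mulVec w := hA0u _
    have hzz : ∀ s : ℝ, (x₀ + s • w) ⬝ᵥ (x₀ + s • w)
        = x₀ ⬝ᵥ x₀ + 2 * (x₀ ⬝ᵥ w) * s + (w ⬝ᵥ w) * (s * s) := by
      intro s
      rw [MSBaux.dot_expand]
      simp only [dotProduct_smul, smul_dotProduct, smul_eq_mul]
      ring
    have hsplit : ∀ s : ℝ, (x₀ + s • w) ⬝ᵥ (a s).mulVec (x₀ + s • w)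
        = s ^ 0 * (x₀ ⬝ᵥ (a s).mulVec x₀) + s ^ 1 * (x₀ ⬝ᵥ (a s).mulVec w)
          + s ^ 1 * (w ⬝ᵥ (a s).mulVec x₀) + s ^ 2 * (w ⬝ᵥ (a s).mulVec w) := by
      intro s
      simp only [Matrix.mulVec_add, Matrix.mulVec_smul, dotProduct_add,
        add_dotProduct, smul_dotProduct, dotProduct_smul, smul_eq_mul]
      ring
    have hIeq : (∫ s in Ioc (0:ℝ) t, (x₀ + s • w) ⬝ᵥ (a s).mulVec (x₀ + s • w))
        = x₀ ⬝ᵥ (Amat a 0 t).mulVec x₀ + x₀ ⬝ᵥ (Amat a 1 t).mulVec w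
          + w ⬝ᵥ (Amat a 1 t).mulVec x₀ + w ⬝ᵥ (Amat a 2 t).mulVec w := by
      simp only [hsplit]
      have I01 : IntegrableOn (fun s : ℝ => s ^ 0 * (x₀ ⬝ᵥ (a s).mulVec x₀)
          + s ^ 1 * (x₀ ⬝ᵥ (a s).mulVec w)) (Ioc (0:ℝ) t) := (bf 0 x₀ x₀).add (bf 1 x₀ w)
      have I012 : IntegrableOn (fun s : ℝ => s ^ 0 * (x₀ ⬝ᵥ (a s).mulVec x₀)
          + s ^ 1 * (x₀ ⬝ᵥ (a s).mulVec w) + s ^ 1 * (w ⬝ᵥ (a s).mulVec x₀)) (Ioc (0:ℝ) t) :=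
        I01.add (bf 1 w x₀)
      rw [integral_add I012 (bf 2 w w), integral_add I01 (bf 1 w x₀),
        integral_add (bf 0 x₀ x₀) (bf 1 x₀ w),
        ← bi 0 x₀ x₀, ← bi 1 x₀ w, ← bi 1 w x₀, ← bi 2 w w]
    have hmono : (∫ s in Ioc (0:ℝ) t, Λ⁻¹ * ((x₀ + s • w) ⬝ᵥ (x₀ + s • w)))
        ≤ ∫ s in Ioc (0:ℝ) t, (x₀ + s • w) ⬝ᵥ (a s).mulVec (x₀ + s • w) := by
      refine setIntegral_mono_on ?_ ?_ measurableSet_Ioc fun s _ => ((hell s).2 _).1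
      · have h : (fun s : ℝ => Λ⁻¹ * ((x₀ + s • w) ⬝ᵥ (x₀ + s • w)))
            = fun s : ℝ => Λ⁻¹ * (x₀ ⬝ᵥ x₀ + 2 * (x₀ ⬝ᵥ w) * s + (w ⬝ᵥ w) * (s * s)) := by
          funext s; rw [hzz s]
        rw [h]
        apply Continuous.integrableOn_Ioc
        fun_prop
      · exact ((((bf 0 x₀ x₀).add (bf 1 x₀ w)).add (bf 1 w x₀)).add (bf 2 w w)).congr
          (Filter.EventuallyEq.of_eq (funext fun s => (hsplit s).symm))
    have hval : (∫ s in Ioc (0:ℝ) t, Λ⁻¹ * ((x₀ + s • w) ⬝ᵥ (x₀ + s • w)))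
        = Λ⁻¹ * ((x₀ ⬝ᵥ x₀) * t + (x₀ ⬝ᵥ w) * t ^ 2 + (w ⬝ᵥ w) * (t ^ 3 / 3)) := by
      have heq : ∀ s : ℝ, Λ⁻¹ * ((x₀ + s • w) ⬝ᵥ (x₀ + s • w))
          = s ^ 0 * (Λ⁻¹ * (x₀ ⬝ᵥ x₀)) + s ^ 1 * (Λ⁻¹ * (2 * (x₀ ⬝ᵥ w)))
            + s ^ 2 * (Λ⁻¹ * (w ⬝ᵥ w)) := by
        intro s; rw [hzz s]; ring
      simp only [heq]
      have J01 : IntegrableOn (fun s : ℝ => s ^ 0 * (Λ⁻¹ * (x₀ ⬝ᵥ x₀))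
          + s ^ 1 * (Λ⁻¹ * (2 * (x₀ ⬝ᵥ w)))) (Ioc (0:ℝ) t) := (ic 0 _).add (ic 1 _)
      rw [integral_add J01 (ic 2 _), integral_add (ic 0 _) (ic 1 _),
        MSBaux.ipow_mul ht 0 _, MSBaux.ipow_mul ht 1 _, MSBaux.ipow_mul ht 2 _]
      push_cast
      ring
    have hS := MSBaux.dot_self_nonneg (x₀ + (t / 2) • w)
    rw [hzz (t / 2)] at hS
    have hfin : (12 * Λ)⁻¹ * t ^ 3 * (w ⬝ᵥ w)
        ≤ Λ⁻¹ * ((x₀ ⬝ᵥ x₀) * t + (x₀ ⬝ᵥ w) * t ^ 2 + (w ⬝ᵥ w) * (t ^ 3 / 3)) := by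
      rw [show ((12 * Λ)⁻¹ : ℝ) = Λ⁻¹ / 12 by rw [mul_inv]; ring]
      have h8 : 0 ≤ (Λ⁻¹ * t) * (x₀ ⬝ᵥ x₀ + 2 * (x₀ ⬝ᵥ w) * (t / 2)
          + (w ⬝ᵥ w) * (t / 2 * (t / 2))) := mul_nonneg (by positivity) hS
      nlinarith [h8]
    have hx0A : x₀ ⬝ᵥ (Amat a 0 t).mulVec x₀ = u ⬝ᵥ ((Amat a 1 t).mulVec w) := by
      rw [hx₀, Matrix.mulVec_neg, dotProduct_neg, neg_dotProduct, neg_neg, hA0u']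
    have hx1A : x₀ ⬝ᵥ (Amat a 1 t).mulVec w = -(u ⬝ᵥ ((Amat a 1 t).mulVec w)) := by
      rw [hx₀, neg_dotProduct]
    have hx2A : w ⬝ᵥ (Amat a 1 t).mulVec x₀ = -(u ⬝ᵥ ((Amat a 1 t).mulVec w)) := by
      rw [MSBaux.dot_mulVec_symm (hsymA 1) w x₀, hx₀, neg_dotProduct]
    calc (12 * Λ)⁻¹ * t ^ 3 * (w ⬝ᵥ w)
        ≤ Λ⁻¹ * ((x₀ ⬝ᵥ x₀) * t + (x₀ ⬝ᵥ w) * t ^ 2 + (w ⬝ᵥ w) * (t ^ 3 / 3)) := hfin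
      _ = ∫ s in Ioc (0:ℝ) t, Λ⁻¹ * ((x₀ + s • w) ⬝ᵥ (x₀ + s • w)) := hval.symm
      _ ≤ ∫ s in Ioc (0:ℝ) t, (x₀ + s • w) ⬝ᵥ (a s).mulVec (x₀ + s • w) := hmono
      _ = x₀ ⬝ᵥ (Amat a 0 t).mulVec x₀ + x₀ ⬝ᵥ (Amat a 1 t).mulVec w
          + w ⬝ᵥ (Amat a 1 t).mulVec x₀ + w ⬝ᵥ (Amat a 2 t).mulVec w := hIeq
      _ = w ⬝ᵥ (Pmat a t).mulVec w := by rw [hx0A, hx1A, hx2A, hd']; ring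
  have hPhigh : ∀ w : Fin d → ℝ,
      w ⬝ᵥ (Pmat a t).mulVec w ≤ (Λ ^ 2 + 1) * t ^ 3 * (w ⬝ᵥ w) := by
    intro w
    have hd' := hPdec w
    have huv : 0 ≤ ((Amat a 0 t)⁻¹.mulVec ((Amat a 1 t).mulVec w)) ⬝ᵥ ((Amat a 1 t).mulVec w) := by
      have h := hposA 0 ((Amat a 0 t)⁻¹.mulVec ((Amat a 1 t).mulVec w))
      rw [hA0u ((Amat a 1 t).mulVec w)] at h
      exact h
    have h2 := hubA 2 w
    have hc2 : ((2:ℕ) : ℝ) + 1 = 3 := by norm_num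
    rw [hc2] at h2
    have h10 : 0 ≤ t ^ 3 * (w ⬝ᵥ w) := mul_nonneg (by positivity) (MSBaux.dot_self_nonneg w)
    have h11 : Λ ≤ 3 * (Λ ^ 2 + 1) := by nlinarith [sq_nonneg (Λ - 1)]
    nlinarith [hd', huv, h2, mul_le_mul_of_nonneg_right h11 h10]
  refine ⟨MSBaux.det_isUnit_of_pd (by positivity) hPlow, ?_⟩
  intro w
  refine ⟨⟨?_, ?_⟩, ?_, ?_⟩
  · rw [MSBaux.eunorm_sq w]; exact hPlow w
  · rw [MSBaux.eunorm_sq w]; exact hPhigh w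
  · intro i hi
    have hi2 : (i : ℝ) ≤ 2 := by exact_mod_cast hi
    have hi0 : (0:ℝ) ≤ (i : ℝ) := Nat.cast_nonneg i
    constructor
    · have h1 := hnl i w
      have h2 : (12 * Λ)⁻¹ * t ^ (i + 1) ≤ Λ⁻¹ * (t ^ (i + 1) / ((i : ℝ) + 1)) := by
        have hp : (0:ℝ) ≤ t ^ (i + 1) := by positivity
        have key : (12 * Λ)⁻¹ ≤ Λ⁻¹ / ((i : ℝ) + 1) := by
          rw [mul_inv, div_eq_mul_inv, mul_comm ((12:ℝ))⁻¹]
          refine mul_le_mul_of_nonneg_left ?_ (by positivity)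
          exact inv_anti₀ (by positivity) (by linarith)
        calc (12 * Λ)⁻¹ * t ^ (i + 1) ≤ Λ⁻¹ / ((i : ℝ) + 1) * t ^ (i + 1) :=
            mul_le_mul_of_nonneg_right key hp
          _ = Λ⁻¹ * (t ^ (i + 1) / ((i : ℝ) + 1)) := by ring
      calc (12 * Λ)⁻¹ * t ^ (i + 1) * eunorm w
          ≤ Λ⁻¹ * (t ^ (i + 1) / ((i : ℝ) + 1)) * eunorm w :=
            mul_le_mul_of_nonneg_right h2 (MSBaux.eunorm_nonneg w)
        _ ≤ eunorm ((Amat a i t).mulVec w) := h1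
    · have h1 := hnu i w
      have h2 : Λ * (t ^ (i + 1) / ((i : ℝ) + 1)) ≤ (Λ ^ 2 + 1) * t ^ (i + 1) := by
        have h3 : t ^ (i + 1) / ((i : ℝ) + 1) ≤ t ^ (i + 1) :=
          div_le_self (by positivity) (by linarith)
        calc Λ * (t ^ (i + 1) / ((i : ℝ) + 1)) ≤ Λ * t ^ (i + 1) :=
            mul_le_mul_of_nonneg_left h3 (by positivity)
          _ ≤ (Λ ^ 2 + 1) * t ^ (i + 1) := by
            have hp : (0:ℝ) ≤ t ^ (i + 1) := by positivity
            nlinarith [sq_nonneg (Λ - 1)]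
      exact le_trans h1 (mul_le_mul_of_nonneg_right h2 (MSBaux.eunorm_nonneg w))
  · have hM : (Mmat a t).mulVec w
        = t • w - (Amat a 0 t)⁻¹.mulVec ((Amat a 1 t).mulVec w) := by
      rw [Mmat, Matrix.sub_mulVec, Matrix.smul_mulVec, Matrix.one_mulVec,
        ← Matrix.mulVec_mulVec]
    have hA0invle : ∀ v : Fin d → ℝ,
        eunorm ((Amat a 0 t)⁻¹.mulVec v) ≤ Λ / t * eunorm v := by
      intro v
      have hv : (Amat a 0 t).mulVec ((Amat a 0 t)⁻¹.mulVec v) = v := hA0u v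
      have h1 := hnl 0 ((Amat a 0 t)⁻¹.mulVec v)
      rw [hv] at h1
      have h2 : Λ⁻¹ * (t ^ (0 + 1) / (((0:ℕ) : ℝ) + 1)) = t / Λ := by
        push_cast
        rw [pow_one]
        field_simp
        norm_num
      rw [h2] at h1
      have ht' : (0:ℝ) < t / Λ := by positivity
      calc eunorm ((Amat a 0 t)⁻¹.mulVec v)
          = (t / Λ)⁻¹ * (t / Λ * eunorm ((Amat a 0 t)⁻¹.mulVec v)) := by
            rw [← mul_assoc, inv_mul_cancel₀ ht'.ne', one_mul]
        _ ≤ (t / Λ)⁻¹ * eunorm v := mul_le_mul_of_nonneg_left h1 (by positivity)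
        _ = Λ / t * eunorm v := by rw [inv_div]
    rw [hM]
    have h1 := MSBaux.eunorm_sub_le (t • w) ((Amat a 0 t)⁻¹.mulVec ((Amat a 1 t).mulVec w))
    have h2 : eunorm (t • w) = t * eunorm w := by
      rw [MSBaux.eunorm_smul, abs_of_pos ht]
    have h3 := hA0invle ((Amat a 1 t).mulVec w)
    have h4 := hnu 1 w
    have h4' : eunorm ((Amat a 1 t).mulVec w) ≤ Λ * (t ^ 2 / 2) * eunorm w := by
      have hc1 : Λ * (t ^ (1 + 1) / (((1:ℕ) : ℝ) + 1)) = Λ * (t ^ 2 / 2) := by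
        push_cast
        norm_num
      rw [hc1] at h4
      exact h4
    have h5 : Λ / t * (Λ * (t ^ 2 / 2) * eunorm w) = Λ ^ 2 * t / 2 * eunorm w := by
      field_simp
    have h6 : eunorm ((Amat a 0 t)⁻¹.mulVec ((Amat a 1 t).mulVec w))
        ≤ Λ ^ 2 * t / 2 * eunorm w := by
      calc eunorm ((Amat a 0 t)⁻¹.mulVec ((Amat a 1 t).mulVec w))
          ≤ Λ / t * eunorm ((Amat a 1 t).mulVec w) := h3
        _ ≤ Λ / t * (Λ * (t ^ 2 / 2) * eunorm w) :=
            mul_le_mul_of_nonneg_left h4' (by positivity)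
        _ = Λ ^ 2 * t / 2 * eunorm w := h5
    calc eunorm (t • w - (Amat a 0 t)⁻¹.mulVec ((Amat a 1 t).mulVec w))
        ≤ t * eunorm w + Λ ^ 2 * t / 2 * eunorm w := by
          rw [← h2]; linarith [h1, h6]
      _ ≤ (Λ ^ 2 + 1) * t * eunorm w := by
          nlinarith [MSBaux.eunorm_nonneg w, sq_nonneg Λ, ht.le, mul_nonneg (mul_nonneg (sq_nonneg Λ) ht.le) (MSBaux.eunorm_nonneg w)]
end
end

section
/- Let d ≥ 1, Λ ≥ 1, and let a : ℝ → (real symmetric d×d matrices) be measurable with Λ⁻¹|e|² ≤ e·a(t)e ≤ Λ|e|² for all t and e. Then there is a constant c > 0 depending only on d and Λ such that for every t > 0 and every w ∈ ℝ^d with |w| = 1, ∫₀ᵗ |M(s)w|² ds ≥ c·t³. -/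
noncomputable section

open Real MeasureTheory Matrix Set
open scoped ENNReal

namespace Mlb
variable {d : ℕ}

lemma dot_self_nonneg (x : Fin d → ℝ) : 0 ≤ x ⬝ᵥ x :=
  Finset.sum_nonneg fun i _ => mul_self_nonneg _

lemma dot_self_pos {x : Fin d → ℝ} (hx : x ≠ 0) : 0 < x ⬝ᵥ x := by
  rcases (dot_self_nonneg x).lt_or_eq with h | h
  · exact h
  · exfalso; apply hx
    have h0 := (Finset.sum_eq_zero_iff_of_nonneg
      (fun i (_ : i ∈ Finset.univ) => mul_self_nonneg (x i))).1 h.symm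
    funext i
    have := h0 i (Finset.mem_univ i)
    have := mul_self_eq_zero.1 this
    simpa using this

lemma quad_expand (A : Matrix (Fin d) (Fin d) ℝ) (x y : Fin d → ℝ) :
    x ⬝ᵥ A *ᵥ y = ∑ j, ∑ k, x j * A j k * y k := by
  simp [dotProduct, Matrix.mulVec, Finset.mul_sum, mul_assoc]

lemma symm_dot {A : Matrix (Fin d) (Fin d) ℝ} (hA : A.IsSymm) (x y : Fin d → ℝ) :
    x ⬝ᵥ A *ᵥ y = y ⬝ᵥ A *ᵥ x := by
  rw [dotProduct_mulVec, ← Matrix.mulVec_transpose, hA.eq, dotProduct_comm]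

lemma dot_mulVec_symm {A : Matrix (Fin d) (Fin d) ℝ} (hA : A.IsSymm) (x y : Fin d → ℝ) :
    x ⬝ᵥ A *ᵥ y = (A *ᵥ x) ⬝ᵥ y := by
  rw [dotProduct_mulVec, ← Matrix.mulVec_transpose, hA.eq]

/-- Cauchy–Schwarz for the dot product, squared. -/
lemma dot_sq_le (x y : Fin d → ℝ) : (x ⬝ᵥ y) ^ 2 ≤ (x ⬝ᵥ x) * (y ⬝ᵥ y) := by
  have := Finset.sum_mul_sq_le_sq_mul_sq Finset.univ x y
  simpa [dotProduct, pow_two, mul_assoc, mul_comm, mul_left_comm] using this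

/-- Cauchy–Schwarz for a PSD symmetric bilinear form. -/
lemma psd_CS {A : Matrix (Fin d) (Fin d) ℝ} (hA : A.IsSymm)
    (hpsd : ∀ x, 0 ≤ x ⬝ᵥ A *ᵥ x) (u v : Fin d → ℝ) :
    (u ⬝ᵥ A *ᵥ v) ^ 2 ≤ (u ⬝ᵥ A *ᵥ u) * (v ⬝ᵥ A *ᵥ v) := by
  have key : ∀ c : ℝ, 0 ≤ (v ⬝ᵥ A *ᵥ v) * (c * c) + (2 * (u ⬝ᵥ A *ᵥ v)) * c + (u ⬝ᵥ A *ᵥ u) := by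
    intro c
    have h := hpsd (u + c • v)
    have hexp : (u + c • v) ⬝ᵥ A *ᵥ (u + c • v)
        = (v ⬝ᵥ A *ᵥ v) * (c * c) + (2 * (u ⬝ᵥ A *ᵥ v)) * c + (u ⬝ᵥ A *ᵥ u) := by
      rw [Matrix.mulVec_add, Matrix.mulVec_smul, dotProduct_add, add_dotProduct,
        add_dotProduct, dotProduct_smul, smul_dotProduct, smul_dotProduct,
        symm_dot hA v u]
      simp [smul_eq_mul]; ring
    linarith [hexp ▸ h]
  have hd := discrim_le_zero key
  rw [discrim] at hd
  nlinarith [hd]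


/-- Upper operator bound from a quadratic form bound, for symmetric PSD matrices. -/
lemma opnorm_sq_le {A : Matrix (Fin d) (Fin d) ℝ} (hA : A.IsSymm)
    (hpsd : ∀ x, 0 ≤ x ⬝ᵥ A *ᵥ x) {C : ℝ} (hC : 0 ≤ C)
    (hub : ∀ x, x ⬝ᵥ A *ᵥ x ≤ C * (x ⬝ᵥ x)) (x : Fin d → ℝ) :
    (A *ᵥ x) ⬝ᵥ (A *ᵥ x) ≤ C ^ 2 * (x ⬝ᵥ x) := by
  set y := A *ᵥ x with hy
  have hcs := psd_CS hA hpsd y x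
  have h1 : y ⬝ᵥ A *ᵥ x = y ⬝ᵥ y := rfl
  rw [h1] at hcs
  have h2 : y ⬝ᵥ A *ᵥ y ≤ C * (y ⬝ᵥ y) := hub y
  have h3 : x ⬝ᵥ A *ᵥ x ≤ C * (x ⬝ᵥ x) := hub x
  have hyy := dot_self_nonneg y
  have hxx := dot_self_nonneg x
  have hpy := hpsd y
  have hpx := hpsd x
  rcases hyy.lt_or_eq with hpos | hzero
  · have : (y ⬝ᵥ y) ^ 2 ≤ (C * (y ⬝ᵥ y)) * (C * (x ⬝ᵥ x)) := by
      calc (y ⬝ᵥ y) ^ 2 ≤ (y ⬝ᵥ A *ᵥ y) * (x ⬝ᵥ A *ᵥ x) := hcs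
      _ ≤ (C * (y ⬝ᵥ y)) * (C * (x ⬝ᵥ x)) := by
          apply mul_le_mul h2 h3 hpx (le_trans hpy h2)
    have := le_of_mul_le_mul_right (by nlinarith : (y ⬝ᵥ y) * (y ⬝ᵥ y) ≤ (C^2 * (x ⬝ᵥ x)) * (y ⬝ᵥ y)) hpos
    exact this
  · rw [← hzero]; positivity

/-- Lower bound `m²|x|² ≤ |Ax|²` from `m|x|² ≤ x·Ax`. -/
lemma mulVec_sq_lower {A : Matrix (Fin d) (Fin d) ℝ} {m : ℝ}
    (hlb : ∀ x, m * (x ⬝ᵥ x) ≤ x ⬝ᵥ A *ᵥ x) (hm : 0 ≤ m) (x : Fin d → ℝ) :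
    m ^ 2 * (x ⬝ᵥ x) ≤ (A *ᵥ x) ⬝ᵥ (A *ᵥ x) := by
  have hcs := dot_sq_le x (A *ᵥ x)
  have h1 := hlb x
  have hxx := dot_self_nonneg x
  have hyy := dot_self_nonneg (A *ᵥ x)
  have h2 : (m * (x ⬝ᵥ x)) ^ 2 ≤ (x ⬝ᵥ A *ᵥ x) ^ 2 :=
    pow_le_pow_left₀ (mul_nonneg hm hxx) h1 2
  rcases hxx.lt_or_eq with hpos | hzero
  · refine le_of_mul_le_mul_right ?_ hpos
    nlinarith [h2, hcs]
  · rw [← hzero]; nlinarith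

/-- A symmetric matrix with coercive quadratic form is invertible. -/lemma isUnit_det_of_coercive {A : Matrix (Fin d) (Fin d) ℝ} (hA : A.IsSymm) {m : ℝ}
    (hm : 0 < m) (hlb : ∀ x, m * (x ⬝ᵥ x) ≤ x ⬝ᵥ A *ᵥ x) : IsUnit A.det := by
  have hpd : A.PosDef := by
    refine Matrix.PosDef.of_dotProduct_mulVec_pos ?_ ?_
    · rw [Matrix.IsHermitian]
      rw [Matrix.conjTranspose]
      ext i j
      simp [Matrix.map_apply, ← hA.apply i j]
    · intro x hx
      have h1 := hlb x
      have h2 : 0 < m * (x ⬝ᵥ x) := mul_pos hm (dot_self_pos hx)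
      simpa [star_trivial] using lt_of_lt_of_le h2 h1
  exact hpd.det_pos.ne'.isUnit

/-- Bound on the inverse: `|A⁻¹y|² ≤ m⁻²|y|²`. -/
lemma inv_mulVec_sq_le {A : Matrix (Fin d) (Fin d) ℝ} (hA : A.IsSymm) {m : ℝ}
    (hm : 0 < m) (hlb : ∀ x, m * (x ⬝ᵥ x) ≤ x ⬝ᵥ A *ᵥ x) (y : Fin d → ℝ) :
    (A⁻¹ *ᵥ y) ⬝ᵥ (A⁻¹ *ᵥ y) ≤ (m⁻¹) ^ 2 * (y ⬝ᵥ y) := by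
  have hdet := isUnit_det_of_coercive hA hm hlb
  have hval : A *ᵥ (A⁻¹ *ᵥ y) = y := by
    rw [Matrix.mulVec_mulVec, Matrix.mul_nonsing_inv _ hdet, Matrix.one_mulVec]
  have h := mulVec_sq_lower hlb hm.le (A⁻¹ *ᵥ y)
  rw [hval] at h
  have hm2 : (0:ℝ) < m ^ 2 := by positivity
  calc (A⁻¹ *ᵥ y) ⬝ᵥ (A⁻¹ *ᵥ y)
      = (m^2)⁻¹ * (m^2 * ((A⁻¹ *ᵥ y) ⬝ᵥ (A⁻¹ *ᵥ y))) := by field_simp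
    _ ≤ (m^2)⁻¹ * (y ⬝ᵥ y) := mul_le_mul_of_nonneg_left h (by positivity)
    _ = (m⁻¹)^2 * (y ⬝ᵥ y) := by rw [inv_pow]


section Analysis
variable {Λ : ℝ} {a : ℝ → Matrix (Fin d) (Fin d) ℝ}

lemma integrableOn_Ioc_of_bound {f : ℝ → ℝ} (hf : Measurable f) (u v C : ℝ)
    (hb : ∀ s ∈ Set.Ioc u v, |f s| ≤ C) : IntegrableOn f (Set.Ioc u v) := by
  refine Integrable.mono' (g := fun _ => C)
    (integrableOn_const measure_Ioc_lt_top.ne) hf.aestronglyMeasurable ?_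
  filter_upwards [ae_restrict_mem measurableSet_Ioc] with s hs
  simpa using hb s hs

lemma ell_psd (hell : Elliptic Λ a) (hΛ : 1 ≤ Λ) (t : ℝ) (x : Fin d → ℝ) :
    0 ≤ x ⬝ᵥ (a t) *ᵥ x :=
  le_trans (mul_nonneg (inv_nonneg.2 (by linarith)) (dot_self_nonneg x)) ((hell t).2 x).1

lemma abs_entry_le (hell : Elliptic Λ a) (hΛ : 1 ≤ Λ) (t : ℝ) (j k : Fin d) :
    |a t j k| ≤ Λ := by
  have hsymm := (hell t).1
  have hpsd := ell_psd hell hΛ t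
  have hcs := psd_CS hsymm hpsd (Pi.single j 1) (Pi.single k 1)
  have hjk : (Pi.single j (1:ℝ)) ⬝ᵥ (a t) *ᵥ (Pi.single k 1) = a t j k := by
    simp [Matrix.mulVec_single, single_dotProduct]
  have hdj : (Pi.single j (1:ℝ)) ⬝ᵥ (Pi.single j (1:ℝ)) = 1 := by
    simp [single_dotProduct]
  have hdk : (Pi.single k (1:ℝ)) ⬝ᵥ (Pi.single k (1:ℝ)) = 1 := by
    simp [single_dotProduct]
  have hQj := ((hell t).2 (Pi.single j 1)).2
  have hQk := ((hell t).2 (Pi.single k 1)).2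
  rw [hdj] at hQj; rw [hdk] at hQk
  rw [hjk] at hcs
  have h2 : (a t j k) ^ 2 ≤ Λ ^ 2 := by
    calc (a t j k)^2 ≤ _ := hcs
    _ ≤ (Λ * 1) * (Λ * 1) := by
        apply mul_le_mul hQj hQk (hpsd _) (by linarith)
    _ = Λ ^ 2 := by ring
  have := Real.sqrt_le_sqrt h2
  rwa [Real.sqrt_sq_eq_abs, Real.sqrt_sq (by linarith : (0:ℝ) ≤ Λ)] at this

lemma intervalIntegrable_entry (hmeas : MeasCoeff a) (hell : Elliptic Λ a) (hΛ : 1 ≤ Λ)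
    (i : ℕ) (j k : Fin d) (u v : ℝ) :
    IntervalIntegrable (fun s => s ^ i * a s j k) volume u v := by
  rw [intervalIntegrable_iff, Set.uIoc]
  have h1 : Measurable fun s : ℝ => s ^ i := measurable_id.pow_const i
  apply integrableOn_Ioc_of_bound (h1.mul (hmeas j k)) _ _ ((|u| + |v|) ^ i * Λ)
  intro s hs
  have hsb : |s| ≤ |u| + |v| := by
    have hl : -(|u| + |v|) ≤ u ⊓ v :=
      le_inf (by linarith [neg_abs_le u, abs_nonneg v]) (by linarith [neg_abs_le v, abs_nonneg u])
    have hr : u ⊔ v ≤ |u| + |v| :=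
      sup_le (by linarith [le_abs_self u, abs_nonneg v]) (by linarith [le_abs_self v, abs_nonneg u])
    rw [abs_le]
    exact ⟨by linarith [hs.1], by linarith [hs.2]⟩
  show |s ^ i * a s j k| ≤ _
  rw [abs_mul, abs_pow]
  exact mul_le_mul (pow_le_pow_left₀ (abs_nonneg s) hsb i)
    (abs_entry_le hell hΛ s j k) (abs_nonneg _) (by positivity)

lemma integrableOn_entry (hmeas : MeasCoeff a) (hell : Elliptic Λ a) (hΛ : 1 ≤ Λ)
    (i : ℕ) (j k : Fin d) (t : ℝ) :
    IntegrableOn (fun s => s ^ i * a s j k) (Set.Ioc 0 t) := by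
  have h1 : Measurable fun s : ℝ => s ^ i := measurable_id.pow_const i
  apply integrableOn_Ioc_of_bound (h1.mul (hmeas j k)) _ _ (|t| ^ i * Λ)
  intro s hs
  show |s ^ i * a s j k| ≤ _
  rw [abs_mul, abs_pow]
  refine mul_le_mul (pow_le_pow_left₀ (abs_nonneg s) ?_ i)
    (abs_entry_le hell hΛ s j k) (abs_nonneg _) (by positivity)
  rw [abs_le]
  exact ⟨by linarith [hs.1, neg_abs_le t, abs_nonneg t], by linarith [hs.2, le_abs_self t]⟩

lemma cont_Amat (hmeas : MeasCoeff a) (hell : Elliptic Λ a) (hΛ : 1 ≤ Λ)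
    (i : ℕ) (j k : Fin d) : Continuous fun t => Amat a i t j k := by
  have hF : Continuous fun t : ℝ => ∫ s in (0:ℝ)..t, s ^ i * a s j k :=
    intervalIntegral.continuous_primitive
      (fun u v => intervalIntegrable_entry hmeas hell hΛ i j k u v) 0
  have heq : (fun t => Amat a i t j k)
      = (fun t : ℝ => ∫ s in (0:ℝ)..(max t 0), s ^ i * a s j k) := by
    funext t
    show (∫ s in Set.Ioc (0:ℝ) t, s ^ i * a s j k) = _
    rcases le_or_gt t 0 with ht | ht
    · rw [max_eq_right ht, intervalIntegral.integral_same,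
        Set.Ioc_eq_empty (by exact not_lt.2 ht), Measure.restrict_empty,
        integral_zero_measure]
    · rw [max_eq_left ht.le, intervalIntegral.integral_of_le ht.le]
  rw [heq]
  exact hF.comp (continuous_id.max continuous_const)


lemma symm_Amat (hell : Elliptic Λ a) (i : ℕ) (t : ℝ) : (Amat a i t).IsSymm := by
  apply Matrix.IsSymm.ext
  intro j k
  show (∫ s in Set.Ioc (0:ℝ) t, s ^ i * a s k j) = ∫ s in Set.Ioc (0:ℝ) t, s ^ i * a s j k
  congr 1
  funext s
  rw [(hell s).1.apply j k]

lemma meas_quad (hmeas : MeasCoeff a) (x : Fin d → ℝ) :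
    Measurable fun s => x ⬝ᵥ (a s) *ᵥ x := by
  simp only [quad_expand]
  exact Finset.measurable_sum _ fun j _ => Finset.measurable_sum _ fun k _ =>
    (((hmeas j k).const_mul (x j)).mul_const (x k))

lemma integrableOn_quad (hmeas : MeasCoeff a) (hell : Elliptic Λ a) (hΛ : 1 ≤ Λ)
    (i : ℕ) (t : ℝ) (x : Fin d → ℝ) :
    IntegrableOn (fun s => s ^ i * (x ⬝ᵥ (a s) *ᵥ x)) (Set.Ioc 0 t) := by
  have h1 : Measurable fun s : ℝ => s ^ i := measurable_id.pow_const i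
  apply integrableOn_Ioc_of_bound (h1.mul (meas_quad hmeas x)) _ _ (|t| ^ i * (Λ * (x ⬝ᵥ x)))
  intro s hs
  show |s ^ i * (x ⬝ᵥ (a s) *ᵥ x)| ≤ _
  rw [abs_mul, abs_pow]
  refine mul_le_mul (pow_le_pow_left₀ (abs_nonneg s) ?_ i) ?_ (abs_nonneg _) (by positivity)
  · rw [abs_le]
    exact ⟨by linarith [hs.1, neg_abs_le t, abs_nonneg t], by linarith [hs.2, le_abs_self t]⟩
  · rw [abs_of_nonneg (ell_psd hell hΛ s x)]
    exact ((hell s).2 x).2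

lemma quad_Amat (hmeas : MeasCoeff a) (hell : Elliptic Λ a) (hΛ : 1 ≤ Λ)
    (i : ℕ) (t : ℝ) (x : Fin d → ℝ) :
    x ⬝ᵥ (Amat a i t) *ᵥ x = ∫ s in Set.Ioc (0:ℝ) t, s ^ i * (x ⬝ᵥ (a s) *ᵥ x) := by
  rw [quad_expand]
  have h1 : ∀ j k : Fin d, x j * Amat a i t j k * x k
      = ∫ s in Set.Ioc (0:ℝ) t, x j * (s ^ i * a s j k) * x k := by
    intro j k
    show x j * (∫ s in Set.Ioc (0:ℝ) t, s ^ i * a s j k) * x k = _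
    rw [mul_assoc, ← MeasureTheory.integral_mul_const, ← MeasureTheory.integral_const_mul]
    congr 1
    funext s
    ring
  calc ∑ j, ∑ k, x j * Amat a i t j k * x k
      = ∑ j, ∑ k, ∫ s in Set.Ioc (0:ℝ) t, x j * (s ^ i * a s j k) * x k := by
        exact Finset.sum_congr rfl fun j _ => Finset.sum_congr rfl fun k _ => h1 j k
    _ = ∫ s in Set.Ioc (0:ℝ) t, ∑ j, ∑ k, x j * (s ^ i * a s j k) * x k := by
        rw [MeasureTheory.integral_finset_sum _ (fun j _ =>
          MeasureTheory.integrable_finset_sum _ (fun k _ =>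
            ((integrableOn_entry hmeas hell hΛ i j k t).const_mul (x j)).mul_const (x k)))]
        refine Finset.sum_congr rfl fun j _ => ?_
        rw [MeasureTheory.integral_finset_sum _ (fun k _ =>
          ((integrableOn_entry hmeas hell hΛ i j k t).const_mul (x j)).mul_const (x k))]
    _ = ∫ s in Set.Ioc (0:ℝ) t, s ^ i * (x ⬝ᵥ (a s) *ᵥ x) := by
        congr 1
        funext s
        rw [quad_expand, Finset.mul_sum]
        refine Finset.sum_congr rfl fun j _ => ?_
        rw [Finset.mul_sum]
        exact Finset.sum_congr rfl fun k _ => by ring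

lemma setInt_const (t c : ℝ) (ht : 0 ≤ t) : (∫ _ in Set.Ioc (0:ℝ) t, c) = t * c := by
  rw [setIntegral_const, Real.volume_real_Ioc_of_le ht, smul_eq_mul]
  ring

lemma setInt_id_mul (t c : ℝ) (ht : 0 ≤ t) :
    (∫ s in Set.Ioc (0:ℝ) t, s * c) = t ^ 2 / 2 * c := by
  rw [← intervalIntegral.integral_of_le ht, intervalIntegral.integral_mul_const,
    integral_id]
  ring


lemma integrableOn_id_mul (s c : ℝ) : IntegrableOn (fun r => r * c) (Set.Ioc 0 s) := by
  apply integrableOn_Ioc_of_bound (measurable_id.mul_const _) _ _ (|s| * |c|)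
  intro r hr
  simp only [id_eq]
  rw [abs_mul]
  refine mul_le_mul ?_ le_rfl (abs_nonneg _) (abs_nonneg _)
  rw [abs_le]
  exact ⟨by linarith [hr.1, neg_abs_le s, abs_nonneg s], by linarith [hr.2, le_abs_self s]⟩

lemma integrableOn_sub_mul (s c : ℝ) :
    IntegrableOn (fun r => (s - r) * c) (Set.Ioc 0 s) := by
  have h : (fun r : ℝ => (s - r) * c) = fun r => s * c - r * c := by funext r; ring
  rw [h]
  exact (integrableOn_const measure_Ioc_lt_top.ne).sub (integrableOn_id_mul s c)


lemma dot_sub_sq_le (u v : Fin d → ℝ) :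
    (u - v) ⬝ᵥ (u - v) ≤ 2 * (u ⬝ᵥ u) + 2 * (v ⬝ᵥ v) := by
  have h1 := dot_self_nonneg (u + v)
  have e1 : (u + v) ⬝ᵥ (u + v) = u ⬝ᵥ u + u ⬝ᵥ v + v ⬝ᵥ u + v ⬝ᵥ v := by
    rw [add_dotProduct, dotProduct_add, dotProduct_add]; ring
  have e2 : (u - v) ⬝ᵥ (u - v) = u ⬝ᵥ u - u ⬝ᵥ v - v ⬝ᵥ u + v ⬝ᵥ v := by
    rw [sub_dotProduct, dotProduct_sub, dotProduct_sub]; ring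
  linarith


section Pointwise
variable (hmeas : MeasCoeff a) (hell : Elliptic Λ a) (hΛ : 1 ≤ Λ) {s : ℝ} (hs : 0 < s)
include hmeas hell hΛ hs

lemma quadA0_lb (x : Fin d → ℝ) : Λ⁻¹ * s * (x ⬝ᵥ x) ≤ x ⬝ᵥ (Amat a 0 s) *ᵥ x := by
  rw [quad_Amat hmeas hell hΛ]
  calc Λ⁻¹ * s * (x ⬝ᵥ x) = ∫ _ in Set.Ioc (0:ℝ) s, Λ⁻¹ * (x ⬝ᵥ x) := by
        rw [setInt_const _ _ hs.le]; ring
    _ ≤ _ := by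
        refine setIntegral_mono_on (integrableOn_const measure_Ioc_lt_top.ne)
          (integrableOn_quad hmeas hell hΛ 0 s x) measurableSet_Ioc fun r _ => ?_
        rw [pow_zero, one_mul]
        exact ((hell r).2 x).1

lemma quadA0_ub (x : Fin d → ℝ) : x ⬝ᵥ (Amat a 0 s) *ᵥ x ≤ Λ * s * (x ⬝ᵥ x) := by
  rw [quad_Amat hmeas hell hΛ]
  calc _ ≤ ∫ _ in Set.Ioc (0:ℝ) s, Λ * (x ⬝ᵥ x) := by
        refine setIntegral_mono_on (integrableOn_quad hmeas hell hΛ 0 s x)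
          (integrableOn_const measure_Ioc_lt_top.ne) measurableSet_Ioc fun r _ => ?_
        rw [pow_zero, one_mul]
        exact ((hell r).2 x).2
    _ = Λ * s * (x ⬝ᵥ x) := by rw [setInt_const _ _ hs.le]; ring

lemma quadA0_psd (x : Fin d → ℝ) : 0 ≤ x ⬝ᵥ (Amat a 0 s) *ᵥ x := by
  refine le_trans ?_ (quadA0_lb hmeas hell hΛ hs x)
  have h1 : (0:ℝ) ≤ Λ⁻¹ := inv_nonneg.2 (by linarith)
  have := dot_self_nonneg x
  positivity

lemma quadA1_ub (x : Fin d → ℝ) :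
    x ⬝ᵥ (Amat a 1 s) *ᵥ x ≤ Λ * (s ^ 2 / 2) * (x ⬝ᵥ x) := by
  rw [quad_Amat hmeas hell hΛ]
  calc _ ≤ ∫ r in Set.Ioc (0:ℝ) s, r * (Λ * (x ⬝ᵥ x)) := by
        refine setIntegral_mono_on (integrableOn_quad hmeas hell hΛ 1 s x)
          (integrableOn_id_mul s _) measurableSet_Ioc fun r hr => ?_
        rw [pow_one]
        exact mul_le_mul_of_nonneg_left ((hell r).2 x).2 hr.1.le
    _ = Λ * (s ^ 2 / 2) * (x ⬝ᵥ x) := by rw [setInt_id_mul _ _ hs.le]; ring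

lemma quadA1_psd (x : Fin d → ℝ) : 0 ≤ x ⬝ᵥ (Amat a 1 s) *ᵥ x := by
  rw [quad_Amat hmeas hell hΛ]
  refine setIntegral_nonneg measurableSet_Ioc fun r hr => ?_
  have := ell_psd hell hΛ r x
  have := hr.1.le
  positivity

lemma quad_key (x : Fin d → ℝ) :
    Λ⁻¹ * (s ^ 2 / 2) * (x ⬝ᵥ x) ≤
      s * (x ⬝ᵥ (Amat a 0 s) *ᵥ x) - x ⬝ᵥ (Amat a 1 s) *ᵥ x := by
  rw [quad_Amat hmeas hell hΛ, quad_Amat hmeas hell hΛ, ← MeasureTheory.integral_const_mul,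
    ← MeasureTheory.integral_sub
      ((integrableOn_quad hmeas hell hΛ 0 s x).const_mul s)
      (integrableOn_quad hmeas hell hΛ 1 s x)]
  have hrw : (fun r => s * (r ^ 0 * (x ⬝ᵥ (a r) *ᵥ x)) - r ^ 1 * (x ⬝ᵥ (a r) *ᵥ x))
      = fun r => (s - r) * (x ⬝ᵥ (a r) *ᵥ x) := by
    funext r; ring
  rw [hrw]
  calc Λ⁻¹ * (s ^ 2 / 2) * (x ⬝ᵥ x)
      = ∫ r in Set.Ioc (0:ℝ) s, (s - r) * (Λ⁻¹ * (x ⬝ᵥ x)) := by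
        have h1 : (∫ r in Set.Ioc (0:ℝ) s, (s - r) * (Λ⁻¹ * (x ⬝ᵥ x)))
            = (∫ r in Set.Ioc (0:ℝ) s,
                (s * (Λ⁻¹ * (x ⬝ᵥ x)) - r * (Λ⁻¹ * (x ⬝ᵥ x)))) := by
          congr 1; funext r; ring
        rw [h1, MeasureTheory.integral_sub (μ := volume.restrict (Set.Ioc 0 s)) (integrableOn_const measure_Ioc_lt_top.ne :
            IntegrableOn (fun _ => s * (Λ⁻¹ * (x ⬝ᵥ x))) (Set.Ioc 0 s) volume)
          (integrableOn_id_mul s _), setInt_const _ _ hs.le, setInt_id_mul _ _ hs.le]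
        ring
    _ ≤ _ := by
        refine setIntegral_mono_on (integrableOn_sub_mul s _) ?_ measurableSet_Ioc
          fun r hr => ?_
        · apply integrableOn_Ioc_of_bound
            ((measurable_const.sub measurable_id).mul (meas_quad hmeas x)) _ _
            (s * (Λ * (x ⬝ᵥ x)))
          intro r hr
          show |(s - r) * (x ⬝ᵥ (a r) *ᵥ x)| ≤ _
          have hxx := dot_self_nonneg x
          have hq0 := ell_psd hell hΛ r x
          have hq2 := ((hell r).2 x).2
          rw [abs_mul, abs_of_nonneg hq0,
            abs_of_nonneg (by nlinarith [hr.1, hr.2] : (0:ℝ) ≤ s - r)]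
          have h2 : s - r ≤ s := by nlinarith [hr.1]
          exact mul_le_mul h2 hq2 hq0 hs.le
        · refine mul_le_mul_of_nonneg_left ((hell r).2 x).1 ?_
          nlinarith [hr.1, hr.2]

lemma Mw_lb {w : Fin d → ℝ} (hw : w ⬝ᵥ w = 1) :
    (4 * Λ ^ 4)⁻¹ * s ^ 2 ≤ (Mmat a s *ᵥ w) ⬝ᵥ (Mmat a s *ᵥ w) := by
  have hΛ0 : (0:ℝ) < Λ := by linarith
  have hsymm0 := symm_Amat hell 0 s
  have hm : (0:ℝ) < Λ⁻¹ * s := by positivity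
  have hlb : ∀ x : Fin d → ℝ, (Λ⁻¹ * s) * (x ⬝ᵥ x) ≤ x ⬝ᵥ (Amat a 0 s) *ᵥ x :=
    quadA0_lb hmeas hell hΛ hs
  have hdet := isUnit_det_of_coercive hsymm0 hm hlb
  have hid : Amat a 0 s * Mmat a s = s • Amat a 0 s - Amat a 1 s := by
    rw [Mmat, Matrix.mul_sub, Matrix.mul_smul, Matrix.mul_one, ← Matrix.mul_assoc,
      Matrix.mul_nonsing_inv _ hdet, Matrix.one_mul]
  set y := Mmat a s *ᵥ w with hy
  have h1 : w ⬝ᵥ (Amat a 0 s) *ᵥ y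
      = s * (w ⬝ᵥ (Amat a 0 s) *ᵥ w) - w ⬝ᵥ (Amat a 1 s) *ᵥ w := by
    rw [hy, Matrix.mulVec_mulVec, hid, Matrix.sub_mulVec, dotProduct_sub,
      Matrix.smul_mulVec, dotProduct_smul, smul_eq_mul]
  have h2 : Λ⁻¹ * (s ^ 2 / 2) ≤ w ⬝ᵥ (Amat a 0 s) *ᵥ y := by
    rw [h1]
    have hk := quad_key hmeas hell hΛ hs w
    rw [hw, mul_one] at hk
    exact hk
  have h3 : w ⬝ᵥ (Amat a 0 s) *ᵥ y = (Amat a 0 s *ᵥ w) ⬝ᵥ y := dot_mulVec_symm hsymm0 w y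
  have h4 := dot_sq_le (Amat a 0 s *ᵥ w) y
  have h5 : (Amat a 0 s *ᵥ w) ⬝ᵥ (Amat a 0 s *ᵥ w) ≤ (Λ * s) ^ 2 * (w ⬝ᵥ w) :=
    opnorm_sq_le hsymm0 (quadA0_psd hmeas hell hΛ hs) (by positivity)
      (quadA0_ub hmeas hell hΛ hs) w
  rw [hw, mul_one] at h5
  have hyy := dot_self_nonneg y
  have hB : Λ⁻¹ * (s ^ 2 / 2) ≤ (Amat a 0 s *ᵥ w) ⬝ᵥ y := h3 ▸ h2
  have hB2 : (Λ⁻¹ * (s ^ 2 / 2)) ^ 2 ≤ ((Amat a 0 s *ᵥ w) ⬝ᵥ y) ^ 2 :=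
    pow_le_pow_left₀ (by positivity) hB 2
  have h6 : (Λ⁻¹ * (s ^ 2 / 2)) ^ 2 ≤ (Λ * s) ^ 2 * (y ⬝ᵥ y) :=
    le_trans hB2 (le_trans h4 (mul_le_mul_of_nonneg_right h5 hyy))
  have hpos : (0:ℝ) < (Λ * s) ^ 2 := by positivity
  refine le_of_mul_le_mul_right ?_ hpos
  calc (4 * Λ ^ 4)⁻¹ * s ^ 2 * (Λ * s) ^ 2 = (Λ⁻¹ * (s ^ 2 / 2)) ^ 2 := by
        field_simp; ring
    _ ≤ (Λ * s) ^ 2 * (y ⬝ᵥ y) := h6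
    _ = y ⬝ᵥ y * (Λ * s) ^ 2 := by ring

lemma Mw_ub {w : Fin d → ℝ} (hw : w ⬝ᵥ w = 1) :
    (Mmat a s *ᵥ w) ⬝ᵥ (Mmat a s *ᵥ w) ≤ (2 + Λ ^ 4) * s ^ 2 := by
  have hΛ0 : (0:ℝ) < Λ := by linarith
  have hm : (0:ℝ) < Λ⁻¹ * s := by positivity
  have hsymm0 := symm_Amat hell 0 s
  have hsymm1 := symm_Amat hell 1 s
  have hy : Mmat a s *ᵥ w = s • w - (Amat a 0 s)⁻¹ *ᵥ (Amat a 1 s *ᵥ w) := by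
    rw [Mmat, Matrix.sub_mulVec, Matrix.smul_mulVec, Matrix.one_mulVec,
      ← Matrix.mulVec_mulVec]
  set z := (Amat a 0 s)⁻¹ *ᵥ (Amat a 1 s *ᵥ w) with hzdef
  have hz : z ⬝ᵥ z ≤ ((Λ⁻¹ * s)⁻¹) ^ 2 * ((Amat a 1 s *ᵥ w) ⬝ᵥ (Amat a 1 s *ᵥ w)) :=
    inv_mulVec_sq_le hsymm0 hm (quadA0_lb hmeas hell hΛ hs) _
  have hA1w : (Amat a 1 s *ᵥ w) ⬝ᵥ (Amat a 1 s *ᵥ w) ≤ (Λ * (s ^ 2 / 2)) ^ 2 * (w ⬝ᵥ w) :=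
    opnorm_sq_le hsymm1 (quadA1_psd hmeas hell hΛ hs) (by positivity)
      (quadA1_ub hmeas hell hΛ hs) w
  rw [hw, mul_one] at hA1w
  have hzz : z ⬝ᵥ z ≤ Λ ^ 4 * s ^ 2 / 4 := by
    calc z ⬝ᵥ z ≤ ((Λ⁻¹ * s)⁻¹) ^ 2 * (Λ * (s ^ 2 / 2)) ^ 2 :=
          le_trans hz (mul_le_mul_of_nonneg_left hA1w (by positivity))
      _ = Λ ^ 4 * s ^ 2 / 4 := by field_simp; ring
  have hexp := dot_sub_sq_le (s • w) z
  have hsw : (s • w) ⬝ᵥ (s • w) = s ^ 2 := by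
    rw [smul_dotProduct, dotProduct_smul, hw, smul_eq_mul, smul_eq_mul]
    ring
  rw [hy]
  calc (s • w - z) ⬝ᵥ (s • w - z) ≤ 2 * ((s • w) ⬝ᵥ (s • w)) + 2 * (z ⬝ᵥ z) := hexp
    _ ≤ 2 * s ^ 2 + 2 * (Λ ^ 4 * s ^ 2 / 4) := by
        rw [hsw]
        linarith [hzz]
    _ ≤ (2 + Λ ^ 4) * s ^ 2 := by nlinarith [sq_nonneg s, pow_pos hΛ0 4]

end Pointwise

lemma meas_Mw (hmeas : MeasCoeff a) (hell : Elliptic Λ a) (hΛ : 1 ≤ Λ) (w : Fin d → ℝ) :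
    Measurable fun s => (Mmat a s *ᵥ w) ⬝ᵥ (Mmat a s *ᵥ w) := by
  have hA0 : Continuous fun t => Amat a 0 t :=
    continuous_matrix fun j k => cont_Amat hmeas hell hΛ 0 j k
  have hA1e : ∀ j k : Fin d, Measurable fun t => Amat a 1 t j k := fun j k =>
    (cont_Amat hmeas hell hΛ 1 j k).measurable
  have hinv : ∀ j k : Fin d, Measurable fun t => (Amat a 0 t)⁻¹ j k := by
    intro j k
    simp only [Matrix.inv_def, Matrix.smul_apply, Ring.inverse_eq_inv, smul_eq_mul]
    exact (hA0.matrix_det.measurable.inv).mul (hA0.matrix_adjugate.matrix_elem j k).measurable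
  have hM : ∀ j k : Fin d, Measurable fun t => Mmat a t j k := by
    intro j k
    have heq : (fun t => Mmat a t j k) = fun t => t * (1 : Matrix (Fin d) (Fin d) ℝ) j k
        - ∑ l, (Amat a 0 t)⁻¹ j l * Amat a 1 t l k := by
      funext t
      rw [Mmat, Matrix.sub_apply, Matrix.smul_apply, smul_eq_mul, Matrix.mul_apply]
    rw [heq]
    exact (measurable_id.mul_const _).sub
      (Finset.measurable_sum _ fun l _ => (hinv j l).mul (hA1e l k))
  have hMw : ∀ j : Fin d, Measurable fun t => (Mmat a t *ᵥ w) j := by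
    intro j
    have heq : (fun t => (Mmat a t *ᵥ w) j) = fun t => ∑ k, Mmat a t j k * w k := by
      funext t; rfl
    rw [heq]
    exact Finset.measurable_sum _ fun k _ => (hM j k).mul_const _
  have heq : (fun s => (Mmat a s *ᵥ w) ⬝ᵥ (Mmat a s *ᵥ w))
      = fun s => ∑ j, (Mmat a s *ᵥ w) j * (Mmat a s *ᵥ w) j := by
    funext s; rfl
  rw [heq]
  exact Finset.measurable_sum _ fun j _ => (hMw j).mul (hMw j)

lemma eunorm_sq (x : Fin d → ℝ) : eunorm x ^ 2 = x ⬝ᵥ x := by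
  rw [eunorm, Real.sq_sqrt (Finset.sum_nonneg fun i _ => sq_nonneg _)]
  exact Finset.sum_congr rfl fun i _ => (pow_two (x i)).symm ▸ rfl

end Analysis
end Mlb

/-- **The key lower bound `∫₀ᵗ |M(s)w|² ds ≳ t³`** (estimate (2.23)).  The constant `c`
depends only on `d` and `Λ`. -/
theorem M_integral_lower_bound (d : ℕ) (hd : 1 ≤ d) (Λ : ℝ) (hΛ : 1 ≤ Λ) :
    ∃ c : ℝ, 0 < c ∧
      ∀ (a : ℝ → Matrix (Fin d) (Fin d) ℝ), MeasCoeff a → Elliptic Λ a →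
      ∀ t : ℝ, 0 < t → ∀ w : Fin d → ℝ, eunorm w = 1 →
        c * t ^ 3 ≤ ∫ s in Set.Ioc (0:ℝ) t, (eunorm ((Mmat a s).mulVec w)) ^ 2 := by
  have hΛ0 : (0:ℝ) < Λ := by linarith
  refine ⟨(12 * Λ ^ 4)⁻¹, by positivity, ?_⟩
  intro a hmeas hell t ht w hw
  have hww : w ⬝ᵥ w = 1 := by
    rw [← Mlb.eunorm_sq, hw]; norm_num
  have hfi : IntegrableOn (fun s => (Mmat a s *ᵥ w) ⬝ᵥ (Mmat a s *ᵥ w)) (Set.Ioc 0 t) := by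
    apply Mlb.integrableOn_Ioc_of_bound (Mlb.meas_Mw hmeas hell hΛ w) _ _ ((2 + Λ ^ 4) * t ^ 2)
    intro s hs
    have h1 := Mlb.Mw_ub hmeas hell hΛ hs.1 hww
    rw [abs_of_nonneg (Mlb.dot_self_nonneg _)]
    calc (Mmat a s *ᵥ w) ⬝ᵥ (Mmat a s *ᵥ w) ≤ (2 + Λ ^ 4) * s ^ 2 := h1
      _ ≤ (2 + Λ ^ 4) * t ^ 2 := by
          have h2 : s ^ 2 ≤ t ^ 2 := by nlinarith [hs.1, hs.2]
          have h3 : (0:ℝ) ≤ 2 + Λ ^ 4 := by positivity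
          exact mul_le_mul_of_nonneg_left h2 h3
  have hint_eq : (∫ s in Set.Ioc (0:ℝ) t, (eunorm ((Mmat a s).mulVec w)) ^ 2)
      = ∫ s in Set.Ioc (0:ℝ) t, (Mmat a s *ᵥ w) ⬝ᵥ (Mmat a s *ᵥ w) := by
    congr 1
    funext s
    exact Mlb.eunorm_sq _
  rw [hint_eq]
  calc (12 * Λ ^ 4)⁻¹ * t ^ 3 = ∫ s in Set.Ioc (0:ℝ) t, (4 * Λ ^ 4)⁻¹ * s ^ 2 := by
        rw [MeasureTheory.integral_const_mul, ← intervalIntegral.integral_of_le ht.le,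
          integral_pow]
        field_simp
        ring
    _ ≤ ∫ s in Set.Ioc (0:ℝ) t, (Mmat a s *ᵥ w) ⬝ᵥ (Mmat a s *ᵥ w) := by
        refine setIntegral_mono_on ?_ hfi measurableSet_Ioc
          (fun s hs => Mlb.Mw_lb hmeas hell hΛ hs.1 hww)
        apply Mlb.integrableOn_Ioc_of_bound
          (measurable_const.mul (measurable_id.pow_const 2)) _ _ ((4 * Λ ^ 4)⁻¹ * t ^ 2)
        intro s hs
        simp only [id_eq]
        show |(4 * Λ ^ 4)⁻¹ * s ^ 2| ≤ _
        rw [abs_of_nonneg (by positivity)]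
        have h2 : s ^ 2 ≤ t ^ 2 := by nlinarith [hs.1, hs.2]
        exact mul_le_mul_of_nonneg_left h2 (by positivity)
end
end

section
/- Fix d ≥ 1, α ∈ (0,1), θ > 0, and r > 0. Let u : B_r(0) ⊆ ℝ^d → ℝ be twice continuously differentiable with [u]_{log(1/C)^{−θ}(B_r)} < ∞ and [D²u]_{C^{α}(B_r)} < ∞. Then there is a constant C depending only on d, α, θ such that for every ε ∈ (0, min(r, 1/2)): sup_{B_r} |D²u| ≤ C·( (log(1/ε))^{−θ} ε^{−2} [u]_{log(1/C)^{−θ}(B_r)} + ε^{α} [D²u]_{C^{α}(B_r)} ). -/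
noncomputable section

open Real Set

/-- Frobenius norm of a matrix (a fixed matrix norm). -/
def frob {d : ℕ} (M : Matrix (Fin d) (Fin d) ℝ) : ℝ := Real.sqrt (∑ i, ∑ j, (M i j) ^ 2)

/-- The Hessian `D²u` of a function on `ℝ^d`. -/
def hessD {d : ℕ} (u : (Fin d → ℝ) → ℝ) (v : Fin d → ℝ) : Matrix (Fin d) (Fin d) ℝ :=
  Matrix.of fun i j =>
    fderiv ℝ (fun w => fderiv ℝ u w (Pi.single j 1)) v (Pi.single i 1)

set_option maxHeartbeats 1000000

lemma eunorm_eq {d : ℕ} (x : Fin d → ℝ) :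
    eunorm x = ‖(EuclideanSpace.equiv (Fin d) ℝ).symm x‖ := by
  rw [EuclideanSpace.norm_eq]
  unfold eunorm
  congr 1
  refine Finset.sum_congr rfl fun i _ => ?_
  rw [Real.norm_eq_abs, sq_abs]
  rfl

lemma eunorm_nonneg {d : ℕ} (x : Fin d → ℝ) : 0 ≤ eunorm x := Real.sqrt_nonneg _

lemma eunorm_add_le {d : ℕ} (x y : Fin d → ℝ) : eunorm (x + y) ≤ eunorm x + eunorm y := by
  simp only [eunorm_eq, map_add]; exact norm_add_le _ _

lemma eunorm_smul {d : ℕ} (t : ℝ) (x : Fin d → ℝ) : eunorm (t • x) = |t| * eunorm x := by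
  simp only [eunorm_eq, map_smul]; rw [norm_smul, Real.norm_eq_abs]

lemma eunorm_eq_zero {d : ℕ} {x : Fin d → ℝ} : eunorm x = 0 ↔ x = 0 := by
  rw [eunorm_eq, norm_eq_zero, map_eq_zero_iff _ (EuclideanSpace.equiv (Fin d) ℝ).symm.injective]

lemma frob_eq {d : ℕ} (M : Matrix (Fin d) (Fin d) ℝ) :
    frob M = ‖(EuclideanSpace.equiv (Fin d × Fin d) ℝ).symm (fun p => M p.1 p.2)‖ := by
  rw [EuclideanSpace.norm_eq]
  unfold frob
  rw [Fintype.sum_prod_type (f := fun p : Fin d × Fin d =>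
    ‖(EuclideanSpace.equiv (Fin d × Fin d) ℝ).symm (fun p => M p.1 p.2) p‖ ^ 2)]
  congr 1
  refine Finset.sum_congr rfl fun i _ => Finset.sum_congr rfl fun j _ => ?_
  rw [Real.norm_eq_abs, sq_abs]
  rfl

lemma frob_nonneg {d : ℕ} (M : Matrix (Fin d) (Fin d) ℝ) : 0 ≤ frob M := Real.sqrt_nonneg _

lemma frob_triangle {d : ℕ} (X Y : Matrix (Fin d) (Fin d) ℝ) :
    frob X ≤ frob (X - Y) + frob Y := by
  have h : (fun p : Fin d × Fin d => X p.1 p.2)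
      = (fun p : Fin d × Fin d => (X - Y) p.1 p.2) + fun p => Y p.1 p.2 := by
    funext p; simp [Matrix.sub_apply]
  simp only [frob_eq]
  rw [h, map_add]
  exact norm_add_le _ _

lemma abs_entry_le_frob {d : ℕ} (M : Matrix (Fin d) (Fin d) ℝ) (i j : Fin d) :
    |M i j| ≤ frob M := by
  rw [← Real.sqrt_sq_eq_abs]
  apply Real.sqrt_le_sqrt
  calc M i j ^ 2 ≤ ∑ j', (M i j') ^ 2 :=
        Finset.single_le_sum (f := fun j' => M i j' ^ 2)
          (fun _ _ => sq_nonneg _) (Finset.mem_univ j)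
    _ ≤ ∑ i', ∑ j', (M i' j') ^ 2 :=
        Finset.single_le_sum (f := fun i' => ∑ j', (M i' j') ^ 2)
          (fun _ _ => Finset.sum_nonneg fun _ _ => sq_nonneg _) (Finset.mem_univ i)

lemma quadform_le {d : ℕ} (e : Fin d → ℝ) (M : Matrix (Fin d) (Fin d) ℝ) :
    |∑ i, ∑ j, e i * e j * M i j| ≤ (∑ i, (e i)^2) * frob M := by
  have hS : (∑ i, ∑ j, e i * e j * M i j)
      = ∑ p : Fin d × Fin d, (e p.1 * e p.2) * M p.1 p.2 := by
    rw [Fintype.sum_prod_type]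
  rw [hS, ← Real.sqrt_sq_eq_abs]
  have := Finset.sum_mul_sq_le_sq_mul_sq Finset.univ (fun p : Fin d × Fin d => e p.1 * e p.2)
    (fun p => M p.1 p.2)
  calc Real.sqrt ((∑ p : Fin d × Fin d, (e p.1 * e p.2) * M p.1 p.2) ^ 2)
      ≤ Real.sqrt ((∑ p : Fin d × Fin d, (e p.1 * e p.2) ^ 2) *
          ∑ p : Fin d × Fin d, (M p.1 p.2) ^ 2) := Real.sqrt_le_sqrt this
    _ = (∑ i, (e i)^2) * frob M := by
        rw [Real.sqrt_mul (by positivity)]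
        congr 1
        · have : (∑ p : Fin d × Fin d, (e p.1 * e p.2) ^ 2) = (∑ i, (e i)^2) * ∑ i, (e i)^2 := by
            rw [Fintype.sum_prod_type, Finset.sum_mul_sum]
            simp [mul_pow]
          rw [this, Real.sqrt_mul_self (by positivity)]
        · rw [frob]; congr 1
          rw [Fintype.sum_prod_type (f := fun p : Fin d × Fin d => M p.1 p.2 ^ 2)]


lemma n2_single {d : ℕ} (i : Fin d) : ∑ k, ((Pi.single i 1 : Fin d → ℝ) k)^2 = 1 := by
  rw [Finset.sum_eq_single i] <;> simp +contextual [Pi.single_apply]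

lemma eunorm_single {d : ℕ} (i : Fin d) : eunorm ((Pi.single i 1 : Fin d → ℝ)) = 1 := by
  rw [eunorm, n2_single, Real.sqrt_one]

lemma n2_pair {d : ℕ} {i j : Fin d} (hij : i ≠ j) :
    ∑ k, (((Pi.single i 1 + Pi.single j 1 : Fin d → ℝ)) k)^2 = 2 := by
  have : ∀ k, (((Pi.single i 1 + Pi.single j 1 : Fin d → ℝ)) k)^2
      = ((Pi.single i 1 : Fin d → ℝ) k)^2 + ((Pi.single j 1 : Fin d → ℝ) k)^2 := by
    intro k
    rcases eq_or_ne k i with rfl | hki <;> rcases eq_or_ne k j with rfl | hkj <;>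
      simp_all [Pi.single_apply]
  simp only [this, Finset.sum_add_distrib, n2_single]
  norm_num

lemma eunorm_pair_le {d : ℕ} {i j : Fin d} (hij : i ≠ j) :
    eunorm ((Pi.single i 1 + Pi.single j 1 : Fin d → ℝ)) ≤ 2 := by
  rw [eunorm, n2_pair hij]
  nlinarith [Real.sq_sqrt (by norm_num : (0:ℝ) ≤ 2), Real.sqrt_nonneg 2]

lemma eunorm_pair_pos {d : ℕ} {i j : Fin d} (hij : i ≠ j) :
    0 < eunorm ((Pi.single i 1 + Pi.single j 1 : Fin d → ℝ)) := by
  rw [eunorm, n2_pair hij]; positivity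

lemma quad_single {d : ℕ} (M : Matrix (Fin d) (Fin d) ℝ) (i j : Fin d) :
    ∑ i', ∑ j', (Pi.single i 1 : Fin d → ℝ) i' * (Pi.single j 1 : Fin d → ℝ) j' * M i' j' = M i j := by
  rw [Finset.sum_eq_single i]
  · rw [Finset.sum_eq_single j] <;> simp +contextual [Pi.single_apply]
  · intro b _ hb; simp [Pi.single_apply, hb]
  · simp

-- rpow antitone in base for negative exponent
lemma rpow_neg_le {a b θ : ℝ} (ha : 0 < a) (hab : a ≤ b) (hθ : 0 ≤ θ) :
    b ^ (-θ) ≤ a ^ (-θ) := by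
  rw [Real.rpow_neg ha.le, Real.rpow_neg (ha.trans_le hab).le]
  exact inv_anti₀ (Real.rpow_pos_of_pos ha θ) (Real.rpow_le_rpow ha.le hab hθ)


lemma pi_expand {d : ℕ} (x : Fin d → ℝ) : ∑ i, x i • (Pi.single i 1 : Fin d → ℝ) = x := by
  funext k
  simp [Finset.sum_apply, Pi.single_apply]

lemma hessD_apply {d : ℕ} {u : (Fin d → ℝ) → ℝ} {w : Fin d → ℝ}
    (h2 : ContDiffAt ℝ 2 u w) (i j : Fin d) :
    hessD u w i j = fderiv ℝ (fderiv ℝ u) w (Pi.single i 1) (Pi.single j 1) := by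
  have hdA : DifferentiableAt ℝ (fderiv ℝ u) w :=
    (h2.fderiv_right (m := 1) (by norm_num)).differentiableAt (by norm_num)
  set L : ((Fin d → ℝ) →L[ℝ] ℝ) →L[ℝ] ℝ :=
    ContinuousLinearMap.apply ℝ ℝ (Pi.single j 1 : Fin d → ℝ) with hL
  have hcomp : HasFDerivAt (⇑L ∘ fderiv ℝ u)
      (L.comp (fderiv ℝ (fderiv ℝ u) w)) w :=
    L.hasFDerivAt.comp w hdA.hasFDerivAt
  have key : fderiv ℝ (fun z => fderiv ℝ u z (Pi.single j 1)) w
      = L.comp (fderiv ℝ (fderiv ℝ u) w) := hcomp.fderiv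
  show fderiv ℝ (fun z => fderiv ℝ u z (Pi.single j 1)) w (Pi.single i 1) = _
  rw [key]
  rfl

lemma hessD_symm {d : ℕ} {u : (Fin d → ℝ) → ℝ} {w : Fin d → ℝ}
    (h2 : ContDiffAt ℝ 2 u w) (i j : Fin d) :
    hessD u w i j = hessD u w j i := by
  rw [hessD_apply h2, hessD_apply h2]
  exact (h2.isSymmSndFDerivAt (by simp)) _ _

lemma quadform_expand {d : ℕ} {u : (Fin d → ℝ) → ℝ} {w : Fin d → ℝ}
    (h2 : ContDiffAt ℝ 2 u w) (e : Fin d → ℝ) :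
    fderiv ℝ (fderiv ℝ u) w e e = ∑ i, ∑ j, e i * e j * hessD u w i j := by
  set H := fderiv ℝ (fderiv ℝ u) w with hH
  have h1 : H e = ∑ i, e i • H (Pi.single i 1) := by
    conv_lhs => rw [← pi_expand e]
    rw [map_sum]
    exact Finset.sum_congr rfl fun i _ => by rw [map_smul]
  rw [h1, ContinuousLinearMap.sum_apply]
  refine Finset.sum_congr rfl fun i _ => ?_
  rw [ContinuousLinearMap.smul_apply, smul_eq_mul]
  have h2' : H (Pi.single i 1) e = ∑ j, e j * H (Pi.single i 1) (Pi.single j 1) := by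
    conv_lhs => rw [← pi_expand e]
    rw [map_sum]
    exact Finset.sum_congr rfl fun j _ => by rw [map_smul]; rfl
  rw [h2', Finset.mul_sum]
  refine Finset.sum_congr rfl fun j _ => ?_
  rw [hessD_apply h2]
  ring

set_option maxHeartbeats 1000000 in
lemma second_diff_bound {d : ℕ} {α θ : ℝ} (hα : α ∈ Set.Ioo (0:ℝ) 1) (hθ : 0 < θ)
    {r : ℝ} {u : (Fin d → ℝ) → ℝ} {Kl Kh : ℝ}
    (hKh0 : 0 ≤ Kh)
    (hu : ∀ v : Fin d → ℝ, eunorm v < r → ContDiffAt ℝ 2 u v)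
    (hl : ∀ v v' : Fin d → ℝ, eunorm v < r → eunorm v' < r →
      0 < eunorm (v - v') → eunorm (v - v') < 1/2 →
      |u v - u v'| ≤ Kl * Real.log (1 / eunorm (v - v')) ^ (-θ))
    (hh2 : ∀ v v' : Fin d → ℝ, eunorm v < r → eunorm v' < r → v ≠ v' →
      frob (hessD u v - hessD u v') ≤ Kh * eunorm (v - v') ^ α)
    (v₀ e : Fin d → ℝ) (h : ℝ) (hhpos : 0 < h) (hepos : 0 < eunorm e)
    (hroom : eunorm v₀ + h * eunorm e < r) (hsmall : h * eunorm e < 1/2) :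
    |∑ i, ∑ j, e i * e j * hessD u v₀ i j| ≤
      2 * Kl * Real.log (1 / (h * eunorm e)) ^ (-θ) / h ^ 2
        + 2 * Kh * (∑ i, (e i)^2) * (h * eunorm e) ^ α := by
  obtain ⟨hα0, hα1⟩ := hα
  have hne : 0 < eunorm e := hepos
  have hne0 : e ≠ 0 := fun he0 => by rw [he0] at hne; rw [eunorm_eq_zero.mpr rfl] at hne; linarith
  have hhe : 0 < h * eunorm e := mul_pos hhpos hne
  have hv₀ : eunorm v₀ < r := by nlinarith [eunorm_nonneg v₀]
  have hmem : ∀ t : ℝ, |t| ≤ h → eunorm (v₀ + t • e) < r := by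
    intro t ht
    have h1 : eunorm (v₀ + t • e) ≤ eunorm v₀ + eunorm (t • e) := eunorm_add_le _ _
    rw [eunorm_smul] at h1
    nlinarith [abs_nonneg t, eunorm_nonneg e]
  set A := fderiv ℝ u with hA
  set H := fderiv ℝ A with hHdef
  have huC : ∀ t : ℝ, |t| ≤ h → ContDiffAt ℝ 2 u (v₀ + t • e) := fun t ht => hu _ (hmem t ht)
  have hdu : ∀ t : ℝ, |t| ≤ h → DifferentiableAt ℝ u (v₀ + t • e) := fun t ht =>
    (huC t ht).differentiableAt (by norm_num)
  have hdA : ∀ t : ℝ, |t| ≤ h → DifferentiableAt ℝ A (v₀ + t • e) := fun t ht =>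
    ((huC t ht).fderiv_right (m := 1) (by norm_num)).differentiableAt (by norm_num)
  have hline : ∀ t : ℝ, HasDerivAt (fun s : ℝ => v₀ + s • e) e t := by
    intro t
    have := ((hasDerivAt_id t).smul_const e).const_add v₀
    simpa using this
  have hg : ∀ t : ℝ, |t| ≤ h →
      HasDerivAt (fun s : ℝ => u (v₀ + s • e)) (A (v₀ + t • e) e) t := by
    intro t ht
    have := (hdu t ht).hasFDerivAt.comp_hasDerivAt t (hline t)
    exact this
  set L : ((Fin d → ℝ) →L[ℝ] ℝ) →L[ℝ] ℝ := ContinuousLinearMap.apply ℝ ℝ e with hL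
  have hg1 : ∀ t : ℝ, |t| ≤ h →
      HasDerivAt (fun s : ℝ => A (v₀ + s • e) e) (H (v₀ + t • e) e e) t := by
    intro t ht
    have hc : HasFDerivAt (fun w => A w e) (L.comp (H (v₀ + t • e))) (v₀ + t • e) :=
      L.hasFDerivAt.comp _ (hdA t ht).hasFDerivAt
    have := hc.comp_hasDerivAt t (hline t)
    exact this
  have hquad : ∀ t : ℝ, |t| ≤ h →
      H (v₀ + t • e) e e = ∑ i, ∑ j, e i * e j * hessD u (v₀ + t • e) i j :=
    fun t ht => quadform_expand (huC t ht) e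
  set Q₀ : ℝ := ∑ i, ∑ j, e i * e j * hessD u v₀ i j with hQ₀
  have h0mem : |(0:ℝ)| ≤ h := by simp [hhpos.le]
  have hpt0 : v₀ + (0:ℝ) • e = v₀ := by simp
  have hquad0 : H v₀ e e = Q₀ := by
    have := hquad 0 h0mem
    rwa [hpt0] at this
  set B : ℝ := Kh * (∑ i, (e i)^2) * (h * eunorm e) ^ α with hB
  have hBnn : 0 ≤ B := by
    apply mul_nonneg (mul_nonneg hKh0 (Finset.sum_nonneg fun _ _ => sq_nonneg _))
    positivity
  have hquadbound : ∀ t : ℝ, |t| ≤ h → |H (v₀ + t • e) e e - Q₀| ≤ B := by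
    intro t ht
    rcases eq_or_ne t 0 with rfl | ht0
    · rw [hpt0, hquad0, sub_self, abs_zero]; exact hBnn
    · have hneq : v₀ + t • e ≠ v₀ := by
        intro heq
        have : t • e = 0 := by
          have := congrArg (fun z => z - v₀) heq
          simpa using this
        rcases smul_eq_zero.mp this with h' | h'
        · exact ht0 h'
        · exact hne0 h'
      have hdiff : H (v₀ + t • e) e e - Q₀
          = ∑ i, ∑ j, e i * e j * (hessD u (v₀ + t • e) - hessD u v₀) i j := by
        rw [hquad t ht, hQ₀, ← Finset.sum_sub_distrib]
        refine Finset.sum_congr rfl fun i _ => ?_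
        rw [← Finset.sum_sub_distrib]
        refine Finset.sum_congr rfl fun j _ => ?_
        rw [Matrix.sub_apply]; ring
      rw [hdiff]
      have hq := quadform_le e (hessD u (v₀ + t • e) - hessD u v₀)
      have hsub : (v₀ + t • e) - v₀ = t • e := by abel
      have hfr : frob (hessD u (v₀ + t • e) - hessD u v₀)
          ≤ Kh * (|t| * eunorm e) ^ α := by
        have := hh2 _ _ (hmem t ht) hv₀ hneq
        rwa [hsub, eunorm_smul] at this
      have hmono : (|t| * eunorm e) ^ α ≤ (h * eunorm e) ^ α := by
        apply Real.rpow_le_rpow (by positivity) ?_ hα0.le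
        nlinarith [abs_nonneg t]
      calc |∑ i, ∑ j, e i * e j * (hessD u (v₀ + t • e) - hessD u v₀) i j|
          ≤ (∑ i, (e i)^2) * frob (hessD u (v₀ + t • e) - hessD u v₀) := hq
        _ ≤ (∑ i, (e i)^2) * (Kh * (|t| * eunorm e) ^ α) := by
            apply mul_le_mul_of_nonneg_left hfr (Finset.sum_nonneg fun _ _ => sq_nonneg _)
        _ ≤ (∑ i, (e i)^2) * (Kh * (h * eunorm e) ^ α) := by
            apply mul_le_mul_of_nonneg_left _ (Finset.sum_nonneg fun _ _ => sq_nonneg _)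
            exact mul_le_mul_of_nonneg_left hmono hKh0
        _ = B := by rw [hB]; ring
  set ψ : ℝ → ℝ := fun t => u (v₀ + t • e) + u (v₀ + (-t) • e) - 2 * u v₀ - t^2 * Q₀ with hψdef
  set ψ' : ℝ → ℝ := fun t => A (v₀ + t • e) e - A (v₀ + (-t) • e) e - 2 * t * Q₀ with hψ'def
  have habsneg : ∀ t : ℝ, |t| ≤ h → |(-t)| ≤ h := fun t ht => by rwa [abs_neg]
  have hDψ : ∀ t : ℝ, |t| ≤ h → HasDerivAt ψ (ψ' t) t := by
    intro t ht
    have h1 := hg t ht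
    have h2 : HasDerivAt (fun s : ℝ => u (v₀ + (-s) • e)) (-(A (v₀ + (-t) • e) e)) t := by
      have hneg : HasDerivAt (fun s : ℝ => -s) (-1 : ℝ) t := (hasDerivAt_id t).neg
      have := (hg (-t) (habsneg t ht)).comp t hneg
      simpa [Function.comp_def, mul_comm] using this
    have h3 : HasDerivAt (fun s : ℝ => s^2 * Q₀) (2 * t * Q₀) t := by
      have := (hasDerivAt_pow 2 t).mul_const Q₀
      norm_num at this
      convert this using 1 <;> ring
    have hres := ((h1.add h2).sub (hasDerivAt_const t (2 * u v₀))).sub h3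
    exact hres.congr_deriv (by rw [hψ'def]; ring)
  have hDψ' : ∀ t : ℝ, |t| ≤ h →
      HasDerivAt ψ' (H (v₀ + t • e) e e + H (v₀ + (-t) • e) e e - 2 * Q₀) t := by
    intro t ht
    have h1 := hg1 t ht
    have h2 : HasDerivAt (fun s : ℝ => A (v₀ + (-s) • e) e) (-(H (v₀ + (-t) • e) e e)) t := by
      have hneg : HasDerivAt (fun s : ℝ => -s) (-1 : ℝ) t := (hasDerivAt_id t).neg
      have := (hg1 (-t) (habsneg t ht)).comp t hneg
      simpa [Function.comp_def, mul_comm] using this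
    have h3 : HasDerivAt (fun s : ℝ => 2 * s * Q₀) (2 * Q₀) t := by
      have := ((hasDerivAt_id t).const_mul (2:ℝ)).mul_const Q₀
      norm_num at this
      convert this using 1 <;> ring
    have hres := (h1.sub h2).sub h3
    exact hres.congr_deriv (by ring)
  have hIccmem : ∀ t : ℝ, t ∈ Set.Icc (0:ℝ) h → |t| ≤ h := fun t ht =>
    abs_le.mpr ⟨by linarith [ht.1, hhpos.le], ht.2⟩
  have hψ''bound : ∀ t ∈ Set.Icc (0:ℝ) h,
      ‖H (v₀ + t • e) e e + H (v₀ + (-t) • e) e e - 2 * Q₀‖ ≤ 2 * B := by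
    intro t ht
    rw [Real.norm_eq_abs]
    have b1 := hquadbound t (hIccmem t ht)
    have b2 := hquadbound (-t) (habsneg t (hIccmem t ht))
    calc |H (v₀ + t • e) e e + H (v₀ + (-t) • e) e e - 2 * Q₀|
        = |(H (v₀ + t • e) e e - Q₀) + (H (v₀ + (-t) • e) e e - Q₀)| := by ring_nf
      _ ≤ |H (v₀ + t • e) e e - Q₀| + |H (v₀ + (-t) • e) e e - Q₀| := abs_add_le _ _
      _ ≤ 2 * B := by linarith
  have hψ'0 : ψ' 0 = 0 := by simp [hψ'def]
  have hψ0 : ψ 0 = 0 := by simp [hψdef]; ring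
  have hmvt1 : ∀ t ∈ Set.Icc (0:ℝ) h, |ψ' t| ≤ (2 * B) * h := by
    intro t ht
    have := Convex.norm_image_sub_le_of_norm_hasDerivWithin_le
      (f := ψ') (f' := fun t => H (v₀ + t • e) e e + H (v₀ + (-t) • e) e e - 2 * Q₀)
      (s := Set.Icc (0:ℝ) h)
      (fun x hx => (hDψ' x (hIccmem x hx)).hasDerivWithinAt)
      hψ''bound (convex_Icc _ _) (Set.left_mem_Icc.mpr hhpos.le) ht
    rw [hψ'0, sub_zero, Real.norm_eq_abs] at this
    calc |ψ' t| ≤ 2 * B * ‖t - 0‖ := this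
      _ ≤ (2 * B) * h := by
          rw [sub_zero, Real.norm_eq_abs]
          exact mul_le_mul_of_nonneg_left (hIccmem t ht) (by linarith)
  have hmvt2 : |ψ h| ≤ (2 * B * h) * h := by
    have := Convex.norm_image_sub_le_of_norm_hasDerivWithin_le
      (f := ψ) (f' := ψ') (s := Set.Icc (0:ℝ) h)
      (fun x hx => (hDψ x (hIccmem x hx)).hasDerivWithinAt)
      (fun x hx => by rw [Real.norm_eq_abs]; exact hmvt1 x hx)
      (convex_Icc _ _) (Set.left_mem_Icc.mpr hhpos.le) (Set.right_mem_Icc.mpr hhpos.le)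
    rw [hψ0, sub_zero, Real.norm_eq_abs, sub_zero, Real.norm_eq_abs,
      abs_of_pos hhpos] at this
    exact this
  -- the two increments
  have hhabs : |h| ≤ h := by rw [abs_of_pos hhpos]
  have hd1 : eunorm ((v₀ + h • e) - v₀) = h * eunorm e := by
    rw [show (v₀ + h • e) - v₀ = h • e by abel, eunorm_smul, abs_of_pos hhpos]
  have hd2 : eunorm ((v₀ + (-h) • e) - v₀) = h * eunorm e := by
    rw [show (v₀ + (-h) • e) - v₀ = (-h) • e by abel, eunorm_smul, abs_neg, abs_of_pos hhpos]
  have hl1 : |u (v₀ + h • e) - u v₀| ≤ Kl * Real.log (1 / (h * eunorm e)) ^ (-θ) := by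
    have := hl (v₀ + h • e) v₀ (hmem h hhabs) hv₀ (by rw [hd1]; exact hhe) (by rw [hd1]; exact hsmall)
    rwa [hd1] at this
  have hl2 : |u (v₀ + (-h) • e) - u v₀| ≤ Kl * Real.log (1 / (h * eunorm e)) ^ (-θ) := by
    have := hl (v₀ + (-h) • e) v₀ (hmem (-h) (habsneg h hhabs)) hv₀
      (by rw [hd2]; exact hhe) (by rw [hd2]; exact hsmall)
    rwa [hd2] at this
  set Lg : ℝ := Real.log (1 / (h * eunorm e)) ^ (-θ) with hLg
  have hψh : h^2 * Q₀ = (u (v₀ + h • e) - u v₀) + (u (v₀ + (-h) • e) - u v₀) - ψ h := by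
    rw [hψdef]; ring
  have hfin : |Q₀| * h^2 ≤ 2 * Kl * Lg + (2 * B * h) * h := by
    have habs : |h^2 * Q₀| ≤ 2 * Kl * Lg + (2 * B * h) * h := by
      rw [hψh]
      calc |(u (v₀ + h • e) - u v₀) + (u (v₀ + (-h) • e) - u v₀) - ψ h|
          ≤ |u (v₀ + h • e) - u v₀| + |u (v₀ + (-h) • e) - u v₀| + |ψ h| := by
            exact (abs_sub _ _).trans (by gcongr; exact abs_add_le _ _)
        _ ≤ 2 * Kl * Lg + (2 * B * h) * h := by linarith
    rw [abs_mul, abs_of_nonneg (sq_nonneg h)] at habs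
    linarith
  have hh2pos : (0:ℝ) < h^2 := by positivity
  calc |Q₀| = |Q₀| * h^2 / h^2 := by field_simp
    _ ≤ (2 * Kl * Lg + (2 * B * h) * h) / h^2 := by gcongr
    _ = 2 * Kl * Lg / h^2 + 2 * B := by field_simp
    _ = 2 * Kl * Lg / h^2 + 2 * Kh * (∑ i, (e i)^2) * (h * eunorm e) ^ α := by
        rw [hB]; ring

lemma frob_le_of_entries {d : ℕ} {M : Matrix (Fin d) (Fin d) ℝ} {E : ℝ} (hE : 0 ≤ E)
    (h : ∀ i j, |M i j| ≤ E) : frob M ≤ d * E := by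
  have h1 : ∀ i j, (M i j)^2 ≤ E^2 := fun i j => by
    rw [← sq_abs]; exact pow_le_pow_left₀ (abs_nonneg _) (h i j) 2
  have h2 : (∑ i, ∑ j, (M i j)^2) ≤ (d:ℝ) * ((d:ℝ) * E^2) := by
    calc (∑ i, ∑ j, (M i j)^2) ≤ ∑ _i : Fin d, ∑ _j : Fin d, E^2 := by
          apply Finset.sum_le_sum; intro i _; apply Finset.sum_le_sum; intro j _; exact h1 i j
      _ = (d:ℝ) * ((d:ℝ) * E^2) := by
          simp [Finset.sum_const, Finset.card_univ, mul_assoc]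
  calc frob M ≤ Real.sqrt ((d:ℝ) * ((d:ℝ) * E^2)) := Real.sqrt_le_sqrt h2
    _ = d * E := by
        rw [show (d:ℝ) * ((d:ℝ) * E^2) = ((d:ℝ)*E)^2 by ring, Real.sqrt_sq (by positivity)]

/-- **log-Hölder interpolation inequality** (Lemma 4.9).  Here `Kl` bounds the log-Hölder
seminorm `[u]_{log(1/C)^{−θ}(B_r)}` and `Kh` bounds the Hölder seminorm
`[D²u]_{C^α(B_r)}`; the constant `C` depends only on `d`, `α`, `θ`. -/
theorem log_holder_interpolation (d : ℕ) (hd : 1 ≤ d) (α θ : ℝ)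
    (hα : α ∈ Set.Ioo (0:ℝ) 1) (hθ : 0 < θ) :
    ∃ C : ℝ, 0 < C ∧
      ∀ (r : ℝ) (u : (Fin d → ℝ) → ℝ) (Kl Kh : ℝ), 0 < r →
        -- `u` is twice continuously differentiable on `B_r`
        (∀ v : Fin d → ℝ, eunorm v < r → ContDiffAt ℝ 2 u v) →
        -- `[u]_{log(1/C)^{−θ}(B_r)} ≤ Kl`
        (∀ v v' : Fin d → ℝ, eunorm v < r → eunorm v' < r →
          0 < eunorm (v - v') → eunorm (v - v') < 1/2 →
          |u v - u v'| ≤ Kl * Real.log (1 / eunorm (v - v')) ^ (-θ)) →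
        -- `[D²u]_{C^α(B_r)} ≤ Kh`
        (∀ v v' : Fin d → ℝ, eunorm v < r → eunorm v' < r → v ≠ v' →
          frob (hessD u v - hessD u v') ≤ Kh * eunorm (v - v') ^ α) →
        ∀ ε : ℝ, 0 < ε → ε < min r (1/2) →
          ∀ v : Fin d → ℝ, eunorm v < r →
            frob (hessD u v) ≤
              C * (Real.log (1/ε) ^ (-θ) * ε ^ (-2:ℝ) * Kl + ε ^ α * Kh) := by
  obtain ⟨hα0, hα1⟩ := hα
  refine ⟨768 * d + 768, by positivity, ?_⟩
  intro r u Kl Kh hr hu hl hh2 ε hε0 hεlt v hv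
  have hεr : ε < r := hεlt.trans_le (min_le_left _ _)
  have hεhalf : ε < 1/2 := hεlt.trans_le (min_le_right _ _)
  have hε1 : ε < 1 := by linarith
  -- Kl, Kh are nonnegative
  have i0 : Fin d := ⟨0, hd⟩
  set c : ℝ := min (r/2) (1/4) with hc
  have hc0 : 0 < c := lt_min (by linarith) (by norm_num)
  have hc4 : c ≤ 1/4 := min_le_right _ _
  have hcr : c < r := (min_le_left _ _).trans_lt (by linarith)
  set z : Fin d → ℝ := c • (Pi.single i0 1 : Fin d → ℝ) with hz
  have hznorm : eunorm z = c := by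
    rw [hz, eunorm_smul, eunorm_single, abs_of_pos hc0, mul_one]
  have h0norm : eunorm (0 : Fin d → ℝ) = 0 := eunorm_eq_zero.mpr rfl
  have h0z : eunorm ((0 : Fin d → ℝ) - z) = c := by
    rw [zero_sub, show -z = (-c) • (Pi.single i0 1 : Fin d → ℝ) by rw [hz, neg_smul],
      eunorm_smul, eunorm_single, abs_neg, abs_of_pos hc0, mul_one]
  have hLc : (0:ℝ) < Real.log (1 / c) ^ (-θ) := by
    apply Real.rpow_pos_of_pos
    apply Real.log_pos
    rw [lt_div_iff₀ hc0]; linarith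
  have hKl0 : 0 ≤ Kl := by
    have hb := hl 0 z (by rw [h0norm]; exact hr) (by rw [hznorm]; exact hcr)
      (by rw [h0z]; exact hc0) (by rw [h0z]; linarith)
    rw [h0z] at hb
    nlinarith [abs_nonneg (u 0 - u z)]
  have hKh0 : 0 ≤ Kh := by
    have hzne : (0 : Fin d → ℝ) ≠ z := by
      intro heq
      rw [← heq, h0norm] at hznorm
      linarith
    have hb := hh2 0 z (by rw [h0norm]; exact hr) (by rw [hznorm]; exact hcr) hzne
    rw [h0z] at hb
    have hcα : (0:ℝ) < c ^ α := Real.rpow_pos_of_pos hc0 α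
    nlinarith [frob_nonneg (hessD u 0 - hessD u z)]
  -- setup
  set Lε : ℝ := Real.log (1/ε) ^ (-θ) with hLε
  have hLεpos : 0 < Lε := by
    apply Real.rpow_pos_of_pos
    apply Real.log_pos
    rw [lt_div_iff₀ hε0]; linarith
  have hLmono : ∀ s : ℝ, 0 < s → s ≤ ε → Real.log (1/s) ^ (-θ) ≤ Lε := by
    intro s hs hsε
    apply rpow_neg_le ?_ ?_ hθ.le
    · apply Real.log_pos; rw [lt_div_iff₀ hε0]; linarith
    · apply Real.log_le_log (by positivity)
      exact one_div_le_one_div_of_le hs hsε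
  have hrp : ε ^ (-2:ℝ) = (ε^2)⁻¹ := by
    rw [show ((-2:ℝ)) = -((2:ℕ):ℝ) by norm_num, Real.rpow_neg hε0.le, Real.rpow_natCast]
  set E1 : ℝ := Kl * Lε * ε ^ (-2:ℝ) with hE1
  set E2 : ℝ := Kh * ε ^ α with hE2
  have hE1nn : 0 ≤ E1 := by
    apply mul_nonneg (mul_nonneg hKl0 hLεpos.le) (Real.rpow_nonneg hε0.le _)
  have hE2nn : 0 ≤ E2 := mul_nonneg hKh0 (Real.rpow_nonneg hε0.le _)
  set h : ℝ := ε/16 with hh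
  have hhpos : 0 < h := by rw [hh]; linarith
  -- the interior point
  set q : ℝ := ε / (4*r) with hq
  have hq0 : 0 < q := by rw [hq]; positivity
  have hqlt : q < 1/4 := by
    rw [hq, div_lt_iff₀ (by linarith)]; nlinarith
  set v₀ : Fin d → ℝ := (1 - q) • v with hv₀
  set R : ℝ := eunorm v with hR
  have hRnn : 0 ≤ R := eunorm_nonneg v
  have hv₀norm : eunorm v₀ = (1 - q) * R := by
    rw [hv₀, eunorm_smul, abs_of_pos (by linarith), hR]
  have hq1 : q * (4*r) = ε := by rw [hq]; field_simp
  have hroom8 : eunorm v₀ + ε/8 < r := by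
    rw [hv₀norm]
    nlinarith [mul_nonneg hq0.le hRnn, mul_nonneg hq0.le hr.le]
  have hv₀ball : eunorm v₀ < r := by linarith
  have hCD : ContDiffAt ℝ 2 u v₀ := hu v₀ hv₀ball
  -- diagonal entries
  have hdiag : ∀ i : Fin d, |hessD u v₀ i i| ≤ 512 * E1 + 2 * E2 := by
    intro i
    have hne : eunorm (Pi.single i 1 : Fin d → ℝ) = 1 := eunorm_single i
    have hkey := second_diff_bound ⟨hα0, hα1⟩ hθ hKh0 hu hl hh2 v₀ (Pi.single i 1) h hhpos
      (by rw [hne]; norm_num)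
      (by rw [hne, mul_one]; rw [hh]; linarith)
      (by rw [hne, mul_one]; rw [hh]; linarith)
    rw [hne, mul_one, n2_single, mul_one, quad_single] at hkey
    have hb1 : 2 * Kl * Real.log (1/h) ^ (-θ) / h^2 ≤ 512 * E1 := by
      have hm := hLmono h hhpos (by rw [hh]; linarith)
      have heq : (512:ℝ) * E1 = 2 * Kl * Lε / h^2 := by
        rw [hE1, hrp, hh]; field_simp; ring
      rw [heq]
      gcongr
    have hb2 : 2 * Kh * h ^ α ≤ 2 * E2 := by
      rw [hE2]
      have : h ^ α ≤ ε ^ α := Real.rpow_le_rpow hhpos.le (by rw [hh]; linarith) hα0.le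
      nlinarith
    linarith
  -- mixed entries
  have hoff : ∀ i j : Fin d, |hessD u v₀ i j| ≤ 768 * E1 + 4 * E2 := by
    intro i j
    rcases eq_or_ne i j with rfl | hij
    · have := hdiag i; linarith
    · set e : Fin d → ℝ := Pi.single i 1 + Pi.single j 1 with he
      have hnepos : 0 < eunorm e := eunorm_pair_pos hij
      have hnele : eunorm e ≤ 2 := eunorm_pair_le hij
      have hs1 : h * eunorm e ≤ ε/8 := by
        rw [hh]; nlinarith
      have hkey := second_diff_bound ⟨hα0, hα1⟩ hθ hKh0 hu hl hh2 v₀ e h hhpos hnepos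
        (by linarith) (by linarith)
      rw [n2_pair hij] at hkey
      have hexpand : (∑ i', ∑ j', e i' * e j' * hessD u v₀ i' j')
          = hessD u v₀ i i + hessD u v₀ i j + hessD u v₀ j i + hessD u v₀ j j := by
        have hsplit : ∀ i' j' : Fin d, e i' * e j' * hessD u v₀ i' j'
            = (Pi.single i 1 : Fin d → ℝ) i' * (Pi.single i 1 : Fin d → ℝ) j' * hessD u v₀ i' j'
            + (Pi.single i 1 : Fin d → ℝ) i' * (Pi.single j 1 : Fin d → ℝ) j' * hessD u v₀ i' j'
            + (Pi.single j 1 : Fin d → ℝ) i' * (Pi.single i 1 : Fin d → ℝ) j' * hessD u v₀ i' j'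
            + (Pi.single j 1 : Fin d → ℝ) i' * (Pi.single j 1 : Fin d → ℝ) j' * hessD u v₀ i' j' := by
          intro i' j'
          rw [he]
          simp only [Pi.add_apply]
          ring
        simp only [hsplit, Finset.sum_add_distrib, quad_single]
      have hQbound : |(∑ i', ∑ j', e i' * e j' * hessD u v₀ i' j')| ≤ 512 * E1 + 4 * E2 := by
        have hb1 : 2 * Kl * Real.log (1/(h * eunorm e)) ^ (-θ) / h^2 ≤ 512 * E1 := by
          have hm := hLmono (h * eunorm e) (by positivity) (by linarith)
          have heq : (512:ℝ) * E1 = 2 * Kl * Lε / h^2 := by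
            rw [hE1, hrp, hh]; field_simp; ring
          rw [heq]
          gcongr
        have hb2 : 2 * Kh * 2 * (h * eunorm e) ^ α ≤ 4 * E2 := by
          rw [hE2]
          have : (h * eunorm e) ^ α ≤ ε ^ α :=
            Real.rpow_le_rpow (by positivity) (by linarith) hα0.le
          nlinarith
        linarith [hkey]
      have hsymm : hessD u v₀ i j = hessD u v₀ j i := hessD_symm hCD i j
      have hMij : hessD u v₀ i j
          = ((∑ i', ∑ j', e i' * e j' * hessD u v₀ i' j')
              - hessD u v₀ i i - hessD u v₀ j j) / 2 := by
        rw [hexpand, ← hsymm]; ring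
      rw [hMij]
      have hdi := hdiag i
      have hdj := hdiag j
      rw [abs_div, abs_of_nonneg (by norm_num : (0:ℝ) ≤ 2)]
      have := abs_sub (((∑ i', ∑ j', e i' * e j' * hessD u v₀ i' j') - hessD u v₀ i i))
        (hessD u v₀ j j)
      have h2' := abs_sub ((∑ i', ∑ j', e i' * e j' * hessD u v₀ i' j')) (hessD u v₀ i i)
      calc |((∑ i', ∑ j', e i' * e j' * hessD u v₀ i' j')
              - hessD u v₀ i i - hessD u v₀ j j)| / 2
          ≤ (|(∑ i', ∑ j', e i' * e j' * hessD u v₀ i' j')| + |hessD u v₀ i i|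
              + |hessD u v₀ j j|) / 2 := by
            apply div_le_div_of_nonneg_right ?_ (by norm_num)
            · linarith
        _ ≤ 768 * E1 + 4 * E2 := by linarith
  -- assemble
  have hfrobv₀ : frob (hessD u v₀) ≤ d * (768 * E1 + 4 * E2) :=
    frob_le_of_entries (by linarith) hoff
  have hdiffb : frob (hessD u v - hessD u v₀) ≤ E2 := by
    rcases eq_or_ne v v₀ with heq | hne
    · rw [← heq, sub_self]
      have : frob (0 : Matrix (Fin d) (Fin d) ℝ) = 0 := by
        simp [frob]
      rw [this]; exact hE2nn
    · have hvmv₀ : v - v₀ = q • v := by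
        rw [hv₀, sub_smul, one_smul]; abel
      have hdist : eunorm (v - v₀) = q * R := by
        rw [hvmv₀, eunorm_smul, abs_of_pos hq0, hR]
      have hdistle : eunorm (v - v₀) ≤ ε := by
        rw [hdist]
        nlinarith
      have := hh2 v v₀ hv hv₀ball hne
      calc frob (hessD u v - hessD u v₀) ≤ Kh * eunorm (v - v₀) ^ α := this
        _ ≤ Kh * ε ^ α := by
            apply mul_le_mul_of_nonneg_left _ hKh0
            exact Real.rpow_le_rpow (eunorm_nonneg _) hdistle hα0.le
        _ = E2 := by rw [hE2]
  have htri := frob_triangle (hessD u v) (hessD u v₀)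
  have hfinal : frob (hessD u v) ≤ (768 * d) * E1 + (4 * d + 1) * E2 := by
    have : (d:ℝ) * (768 * E1 + 4 * E2) = 768 * d * E1 + 4 * d * E2 := by ring
    linarith [htri, hfrobv₀, hdiffb, this ▸ hfrobv₀]
  have hd1 : (1:ℝ) ≤ (d:ℝ) := by exact_mod_cast hd
  calc frob (hessD u v) ≤ (768 * d) * E1 + (4 * d + 1) * E2 := hfinal
    _ ≤ (768 * d + 768) * E1 + (768 * d + 768) * E2 := by nlinarith
    _ = (768 * d + 768) * (Lε * ε ^ (-2:ℝ) * Kl + ε ^ α * Kh) := by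
        rw [hE1, hE2]; ring
end
end
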